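/- Best NNIL-approximation: for every modal proposition A, the NNIL-algorithm on input A terminates, its output A^* is an NNIL proposition with IPC_□ ⊢ A^*→A, and A^* is the best NNIL approximation of A from below: for every NNIL proposition B with IPC_□ ⊢ B→A one has IPC_□ ⊢ B→A^*. Moreover the construction is monotone: IPC_□ ⊢ A₁→A₂ implies IPC_□ ⊢ A₁^*→A₂^*. -/

import Mathlib

namespace PLHA

/-! ## Modal propositional language -/

/-- Modal propositional formulas: atomic variables, ⊥, ∧, ∨, →, □. -/
inductive Form : Type
  | var : ℕ → Form
  | bot : Form
  | and : Form → Form → Form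
  | or  : Form → Form → Form
  | imp : Form → Form → Form
  | box : Form → Form
  deriving DecidableEq

namespace Form

/-- ⊤ -/
def top : Form := imp bot bot

/-- A ↔ B -/
def iffF (A B : Form) : Form := and (imp A B) (imp B A)

/-- ⊡A := A ∧ □A -/
def boxdot (A : Form) : Form := and A (box A)

/-- `A ∈ NOI`: every occurrence of → is in the scope of some □. -/
def noi : Form → Bool
  | var _ => true
  | bot => true
  | and A B => noi A && noi B
  | or A B => noi A && noi B
  | imp _ _ => false
  | box _ => true

/-- The Leivant translation `A^l`. -/
def lev : Form → Form
  | var n => var n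
  | bot => bot
  | and A B => and (lev A) (lev B)
  | or A B => or (boxdot (lev A)) (boxdot (lev B))
  | imp A B => if noi A then imp A (lev B) else imp A B
  | box A => box A

/-- atomic propositions: atomic variables and ⊥. -/
def isAtom (A : Form) : Prop := (∃ n, A = var n) ∨ A = bot

/-- boxed propositions. -/
def isBoxed (A : Form) : Prop := ∃ B, A = box B

/-- non-modal (□-free) propositions. -/
def boxFree : Form → Bool
  | var _ => true
  | bot => true
  | and A B => boxFree A && boxFree B
  | or A B => boxFree A && boxFree B
  | imp A B => boxFree A && boxFree B
  | box _ => false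

/-- A bound on the indices of the variables occurring in a formula. -/
def fvb : Form → ℕ
  | var n => n + 1
  | bot => 0
  | and A B => max (fvb A) (fvb B)
  | or A B => max (fvb A) (fvb B)
  | imp A B => max (fvb A) (fvb B)
  | box A => fvb A

/-- maximal nesting depth of boxes. -/
def bdep : Form → ℕ
  | var _ => 0
  | bot => 0
  | and A B => max (bdep A) (bdep B)
  | or A B => max (bdep A) (bdep B)
  | imp A B => max (bdep A) (bdep B)
  | box A => bdep A + 1

/-- the complexity measure ρ used to define NNIL. -/
def rho : Form → ℕ
  | var _ => 0
  | bot => 0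
  | and A B => max (rho A) (rho B)
  | or A B => max (rho A) (rho B)
  | imp A B => max (rho A + 1) (rho B)
  | box _ => 0

end Form

/-- NNIL: no nested implications to the left. -/
def NNILc (A : Form) : Prop := Form.rho A ≤ 1

/-- TNNIL: thoroughly NNIL propositions. -/
inductive TNNIL : Form → Prop
  | var (n : ℕ) : TNNIL (.var n)
  | bot : TNNIL .bot
  | and {A B} : TNNIL A → TNNIL B → TNNIL (.and A B)
  | or {A B} : TNNIL A → TNNIL B → TNNIL (.or A B)
  | box {A} : TNNIL A → TNNIL (.box A)
  | imp {A B} : A.noi = true → TNNIL A → TNNIL B → TNNIL (.imp A B)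

/-- TNNIL⁻: propositions of the form B(□C₁,…,□Cₙ) with B non-modal and Cᵢ ∈ TNNIL. -/
inductive TNNILminus : Form → Prop
  | var (n : ℕ) : TNNILminus (.var n)
  | bot : TNNILminus .bot
  | box {A} : TNNIL A → TNNILminus (.box A)
  | and {A B} : TNNILminus A → TNNILminus B → TNNILminus (.and A B)
  | or {A B} : TNNILminus A → TNNILminus B → TNNILminus (.or A B)
  | imp {A B} : TNNILminus A → TNNILminus B → TNNILminus (.imp A B)

/-! ## Proof systems -/

/-- Hilbert-style axioms of intuitionistic propositional logic (over the modal language). -/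
inductive IpcAx : Form → Prop
  | a1 (A B) : IpcAx (.imp A (.imp B A))
  | a2 (A B C) : IpcAx (.imp (.imp A (.imp B C)) (.imp (.imp A B) (.imp A C)))
  | a3 (A B) : IpcAx (.imp A (.imp B (.and A B)))
  | a4 (A B) : IpcAx (.imp (.and A B) A)
  | a5 (A B) : IpcAx (.imp (.and A B) B)
  | a6 (A B) : IpcAx (.imp A (.or A B))
  | a7 (A B) : IpcAx (.imp B (.or A B))
  | a8 (A B C) : IpcAx (.imp (.imp A C) (.imp (.imp B C) (.imp (.or A B) C)))
  | a9 (A) : IpcAx (.imp .bot A)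

/-- Derivability from IPC axioms together with extra axioms `Ax`, modus ponens,
and (if `useNec = true`) the necessitation rule. -/
inductive Proves (Ax : Form → Prop) (useNec : Bool) : Form → Prop
  | ax {A} : Ax A → Proves Ax useNec A
  | ipc {A} : IpcAx A → Proves Ax useNec A
  | mp {A B} : Proves Ax useNec (.imp A B) → Proves Ax useNec A → Proves Ax useNec B
  | nec {A} : useNec = true → Proves Ax useNec A → Proves Ax useNec (.box A)

/-- K and 4 axiom schemas. -/
inductive K4Ax : Form → Prop
  | k (A B) : K4Ax (.imp (.box (.imp A B)) (.imp (.box A) (.box B)))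
  | four (A) : K4Ax (.imp (.box A) (.box (.box A)))

/-- K, 4, and Löb's axiom schemas. -/
inductive GLAx : Form → Prop
  | k (A B) : GLAx (.imp (.box (.imp A B)) (.imp (.box A) (.box B)))
  | four (A) : GLAx (.imp (.box A) (.box (.box A)))
  | lob (A) : GLAx (.imp (.box (.imp (.box A) A)) (.box A))

/-- IPC_□ : intuitionistic propositional logic over the modal language. -/
def IPCbProves : Form → Prop := Proves (fun _ => False) false

/-- iK4. -/
def iK4Proves : Form → Prop := Proves K4Ax true

/-- iGL. -/
def iGLProves : Form → Prop := Proves GLAx true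

/-- the completeness principle CP : A → □A. -/
def CPAx : Form → Prop := fun F => ∃ A : Form, F = .imp A (.box A)

/-- LC := iGL + CP. -/
def LCProves : Form → Prop := Proves (fun F => GLAx F ∨ CPAx F) true

/-- CP restricted to atomic propositions. -/
def CPaAx : Form → Prop := fun F => ∃ A : Form, A.isAtom ∧ F = .imp A (.box A)

/-- the extended Leivant principle Le⁺ : □A → □A^l. -/
def LeplusAx : Form → Prop := fun F => ∃ A : Form, F = .imp (.box A) (.box A.lev)

/-- LLe⁺ := iGL + Le⁺ + CP_a. -/
def LLeplusProves : Form → Prop := Proves (fun F => GLAx F ∨ LeplusAx F ∨ CPaAx F) true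

/-! ## The preservativity relation ▶ -/

/-- the bracket operation [A]B. -/
def bracket (A : Form) : Form → Form
  | .and B C => .and (bracket A B) (bracket A C)
  | .or B C => .or (bracket A B) (bracket A C)
  | .imp B C => .imp A (.imp B C)
  | B => B

def listConj : List Form → Form
  | [] => Form.top
  | [A] => A
  | A :: l => .and A (listConj l)

def listDisj : List Form → Form
  | [] => Form.bot
  | [A] => A
  | A :: l => .or A (listDisj l)

/-- the relation ▶ : the smallest relation satisfying A1–A4 and B1–B3.
In B2 a (finite) set of implications is represented by a list `X` of pairs `(E, F)`
standing for the implications `E → F`. -/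
inductive Pres : Form → Form → Prop
  | a1 {A B} : iK4Proves (.imp A B) → Pres A B
  | a2 {A B C} : Pres A B → Pres B C → Pres A C
  | a3 {A B C} : Pres C A → Pres C B → Pres C (.and A B)
  | a4 {A B} : Pres A B → Pres (.box A) (.box B)
  | b1 {A B C} : Pres A C → Pres B C → Pres (.or A B) C
  | b2 (X : List (Form × Form)) (C : Form) :
      Pres (.imp (listConj (X.map fun p => Form.imp p.1 p.2)) C)
        (listDisj ((X.map Prod.fst ++ [C]).map
          (bracket (listConj (X.map fun p => Form.imp p.1 p.2)))))
  | b3 {A B C} : Pres A B → (C.isAtom ∨ C.isBoxed) → Pres (.imp C A) (.imp C B)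

/-- the axioms of H_σ : LLe⁺ + CP_a + {□A→□B : A ▶ B}. -/
def HsigmaAx : Form → Prop := fun F =>
  GLAx F ∨ LeplusAx F ∨ CPaAx F ∨ ∃ A B : Form, Pres A B ∧ F = .imp (.box A) (.box B)

/-- H_σ. -/
def HsigmaProves : Form → Prop := Proves HsigmaAx true

/-! ## NNIL/TNNIL approximations -/

/-- `star` is (a realization of) Visser's NNIL-algorithm: `star A` is the best NNIL
approximation of `A` from below. -/
def IsNNILApproxOp (star : Form → Form) : Prop :=
  ∀ A : Form, NNILc (star A) ∧ IPCbProves (.imp (star A) A) ∧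
    ∀ B : Form, NNILc B → IPCbProves (.imp B A) → IPCbProves (.imp B (star A))

/-- replace the outermost boxed subformulas of a formula by the fresh variables
`k, k+1, …` (left to right), returning the resulting non-modal skeleton together
with the list of bodies of removed boxes. -/
def strip : Form → ℕ → Form × List Form
  | .var n, _ => (.var n, [])
  | .bot, _ => (.bot, [])
  | .and A B, k =>
      let pa := strip A k
      let pb := strip B (k + pa.2.length)
      (.and pa.1 pb.1, pa.2 ++ pb.2)
  | .or A B, k =>
      let pa := strip A k
      let pb := strip B (k + pa.2.length)
      (.or pa.1 pb.1, pa.2 ++ pb.2)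
  | .imp A B, k =>
      let pa := strip A k
      let pb := strip B (k + pa.2.length)
      (.imp pa.1 pb.1, pa.2 ++ pb.2)
  | .box A, k => (.var k, [A])

/-- simultaneous substitution of formulas for variables. -/
def substF (f : ℕ → Form) : Form → Form
  | .var n => f n
  | .bot => .bot
  | .and A B => .and (substF f A) (substF f B)
  | .or A B => .or (substF f A) (substF f B)
  | .imp A B => .imp (substF f A) (substF f B)
  | .box A => .box (substF f A)

/-- fuelled version of the TNNIL approximation `A⁺`:
`A⁺ := (A')^*[pᵢ | □Bᵢ⁺]` where `A = A'[pᵢ | □Bᵢ]` with `A'` non-modal. -/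
def plusAux (star : Form → Form) : ℕ → Form → Form
  | 0, A => A
  | fuel + 1, A =>
      let k := A.fvb
      let p := strip A k
      substF (fun n =>
        if k ≤ n ∧ n < k + p.2.length then
          .box (plusAux star fuel (p.2.getD (n - k) .bot))
        else .var n) (star p.1)

/-- the TNNIL approximation `A⁺` (relative to a realization `star` of the NNIL-algorithm). -/
def plusF (star : Form → Form) (A : Form) : Form := plusAux star (A.bdep + 1) A

/-- `A⁻`: writing `A = B(□C₁,…,□Cₙ)` with `B` non-modal, `A⁻ := B(□C₁⁺,…,□Cₙ⁺)`. -/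
def minusF (star : Form → Form) (A : Form) : Form :=
  let k := A.fvb
  let p := strip A k
  substF (fun n =>
    if k ≤ n ∧ n < k + p.2.length then
      .box (plusF star (p.2.getD (n - k) .bot))
    else .var n) p.1

/-- the box translation A^□. -/
def boxTr : Form → Form
  | .var n => Form.boxdot (.var n)
  | .bot => Form.boxdot .bot
  | .and A B => .and (boxTr A) (boxTr B)
  | .or A B => .or (boxTr A) (boxTr B)
  | .imp A B => Form.boxdot (.imp (boxTr A) (boxTr B))
  | .box A => .box (boxTr A)

/-- a Gödel numbering of modal formulas. -/
def encodeForm : Form → ℕ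
  | .var n => Nat.pair 0 n
  | .bot => Nat.pair 1 0
  | .and A B => Nat.pair 2 (Nat.pair (encodeForm A) (encodeForm B))
  | .or A B => Nat.pair 3 (Nat.pair (encodeForm A) (encodeForm B))
  | .imp A B => Nat.pair 4 (Nat.pair (encodeForm A) (encodeForm B))
  | .box A => Nat.pair 5 (encodeForm A)

/-! ## Propositional Kripke models -/

/-- Kripke models for intuitionistic modal logic. -/
structure PKripke where
  W : Type
  le : W → W → Prop
  r : W → W → Prop
  V : W → ℕ → Prop
  le_refl : ∀ w, le w w
  le_trans : ∀ {a b c}, le a b → le b c → le a c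
  le_antisymm : ∀ {a b}, le a b → le b a → a = b
  le_r : ∀ {a b c}, le a b → r b c → r a c
  mono : ∀ {a b : W} {n : ℕ}, le a b → V a n → V b n

/-- the forcing relation of a propositional modal Kripke model. -/
def pforces (M : PKripke) : Form → M.W → Prop
  | .var n, w => M.V w n
  | .bot, _ => False
  | .and A B, w => pforces M A w ∧ pforces M B w
  | .or A B, w => pforces M A w ∨ pforces M B w
  | .imp A B, w => ∀ v, M.le w v → pforces M A v → pforces M B v
  | .box A, w => ∀ v, M.r w v → pforces M A v

namespace PKripke

/-- brilliant: (R;≤) ⊆ R. -/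
def Brilliant (M : PKripke) : Prop := ∀ {a b c : M.W}, M.r a b → M.le b c → M.r a c

/-- reverse well-founded: well-founded with respect to R⁻¹. -/
def RevWF (M : PKripke) : Prop := WellFounded (fun a b : M.W => M.r b a)

/-- perfect: brilliant, reverse well-founded, and R ⊆ <. -/
def Perfect (M : PKripke) : Prop :=
  M.Brilliant ∧ M.RevWF ∧ ∀ {a b : M.W}, M.r a b → M.le a b ∧ a ≠ b

/-- the partial order (W,≤) is a tree: it has a root and the set of predecessors
of every node is linearly ordered. -/
def TreeFrame (M : PKripke) : Prop :=
  (∃ root : M.W, ∀ w, M.le root w) ∧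
  ∀ w u v : M.W, M.le u w → M.le v w → (M.le u v ∨ M.le v u)

end PKripke

/-! ## First-order arithmetic -/

/-- terms of the language (S, +, ·, <, 0) (de Bruijn variables). -/
inductive ATerm : Type
  | var : ℕ → ATerm
  | zero : ATerm
  | succ : ATerm → ATerm
  | add : ATerm → ATerm → ATerm
  | mul : ATerm → ATerm → ATerm
  deriving DecidableEq

namespace ATerm

def lift : ATerm → ℕ → ATerm
  | var n, d => if n < d then var n else var (n + 1)
  | zero, _ => zero
  | succ t, d => succ (t.lift d)
  | add t u, d => add (t.lift d) (u.lift d)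
  | mul t u, d => mul (t.lift d) (u.lift d)

def subst : ATerm → ℕ → ATerm → ATerm
  | var n, k, s => if n < k then var n else if n = k then s else var (n - 1)
  | zero, _, _ => zero
  | succ t, k, s => succ (t.subst k s)
  | add t u, k, s => add (t.subst k s) (u.subst k s)
  | mul t u, k, s => mul (t.subst k s) (u.subst k s)

/-- non-binding substitution: replace `var k` by `s`, leaving other variables alone. -/
def substId : ATerm → ℕ → ATerm → ATerm
  | var n, k, s => if n = k then s else var n
  | zero, _, _ => zero
  | succ t, k, s => succ (t.substId k s)
  | add t u, k, s => add (t.substId k s) (u.substId k s)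
  | mul t u, k, s => mul (t.substId k s) (u.substId k s)

/-- all variables have index < k. -/
def vlt : ATerm → ℕ → Prop
  | var n, k => n < k
  | zero, _ => True
  | succ t, k => t.vlt k
  | add t u, k => t.vlt k ∧ u.vlt k
  | mul t u, k => t.vlt k ∧ u.vlt k

/-- evaluation in the standard model ℕ. -/
def evalN : ATerm → (ℕ → ℕ) → ℕ
  | var n, ρ => ρ n
  | zero, _ => 0
  | succ t, ρ => t.evalN ρ + 1
  | add t u, ρ => t.evalN ρ + u.evalN ρ
  | mul t u, ρ => t.evalN ρ * u.evalN ρ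

def fvB : ATerm → ℕ
  | var n => n + 1
  | zero => 0
  | succ t => t.fvB
  | add t u => max t.fvB u.fvB
  | mul t u => max t.fvB u.fvB

/-- a Gödel numbering of terms. -/
def code : ATerm → ℕ
  | var n => Nat.pair 0 n
  | zero => Nat.pair 1 0
  | succ t => Nat.pair 2 t.code
  | add t u => Nat.pair 3 (Nat.pair t.code u.code)
  | mul t u => Nat.pair 4 (Nat.pair t.code u.code)

end ATerm

/-- the numeral of a natural number. -/
def numeral : ℕ → ATerm
  | 0 => .zero
  | n + 1 => .succ (numeral n)

/-- extend an environment by one value at index 0. -/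
def econs {α : Sort*} (b : α) (ρ : ℕ → α) : ℕ → α
  | 0 => b
  | n + 1 => ρ n

/-- first-order formulas of arithmetic (de Bruijn variables). -/
inductive AForm : Type
  | eq : ATerm → ATerm → AForm
  | lt : ATerm → ATerm → AForm
  | fal : AForm
  | and : AForm → AForm → AForm
  | or : AForm → AForm → AForm
  | imp : AForm → AForm → AForm
  | all : AForm → AForm
  | ex : AForm → AForm
  deriving DecidableEq

namespace AForm

def neg (A : AForm) : AForm := imp A fal

def iffA (A B : AForm) : AForm := and (imp A B) (imp B A)

def lift : AForm → ℕ → AForm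
  | eq t u, d => eq (t.lift d) (u.lift d)
  | lt t u, d => lt (t.lift d) (u.lift d)
  | fal, _ => fal
  | and A B, d => and (A.lift d) (B.lift d)
  | or A B, d => or (A.lift d) (B.lift d)
  | imp A B, d => imp (A.lift d) (B.lift d)
  | all A, d => all (A.lift (d + 1))
  | ex A, d => ex (A.lift (d + 1))

/-- capture-avoiding substitution of a term for variable `k` (instantiating a binder). -/
def subst : AForm → ℕ → ATerm → AForm
  | eq t u, k, s => eq (t.subst k s) (u.subst k s)
  | lt t u, k, s => lt (t.subst k s) (u.subst k s)
  | fal, _, _ => fal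
  | and A B, k, s => and (A.subst k s) (B.subst k s)
  | or A B, k, s => or (A.subst k s) (B.subst k s)
  | imp A B, k, s => imp (A.subst k s) (B.subst k s)
  | all A, k, s => all (A.subst (k + 1) (s.lift 0))
  | ex A, k, s => ex (A.subst (k + 1) (s.lift 0))

/-- non-binding substitution: replace the free variable `k` by `s`. -/
def substId : AForm → ℕ → ATerm → AForm
  | eq t u, k, s => eq (t.substId k s) (u.substId k s)
  | lt t u, k, s => lt (t.substId k s) (u.substId k s)
  | fal, _, _ => fal
  | and A B, k, s => and (A.substId k s) (B.substId k s)
  | or A B, k, s => or (A.substId k s) (B.substId k s)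
  | imp A B, k, s => imp (A.substId k s) (B.substId k s)
  | all A, k, s => all (A.substId (k + 1) (s.lift 0))
  | ex A, k, s => ex (A.substId (k + 1) (s.lift 0))

/-- all free variables have index < k. -/
def vlt : AForm → ℕ → Prop
  | eq t u, k => t.vlt k ∧ u.vlt k
  | lt t u, k => t.vlt k ∧ u.vlt k
  | fal, _ => True
  | and A B, k => A.vlt k ∧ B.vlt k
  | or A B, k => A.vlt k ∧ B.vlt k
  | imp A B, k => A.vlt k ∧ B.vlt k
  | all A, k => A.vlt (k + 1)
  | ex A, k => A.vlt (k + 1)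

/-- a bound on the free variables of a formula. -/
def fvB : AForm → ℕ
  | eq t u => max t.fvB u.fvB
  | lt t u => max t.fvB u.fvB
  | fal => 0
  | and A B => max A.fvB B.fvB
  | or A B => max A.fvB B.fvB
  | imp A B => max A.fvB B.fvB
  | all A => A.fvB - 1
  | ex A => A.fvB - 1

/-- classical (Tarskian) satisfaction in the standard model ℕ. -/
def SatN : AForm → (ℕ → ℕ) → Prop
  | eq t u, ρ => t.evalN ρ = u.evalN ρ
  | lt t u, ρ => t.evalN ρ < u.evalN ρ
  | fal, _ => False
  | and A B, ρ => A.SatN ρ ∧ B.SatN ρ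
  | or A B, ρ => A.SatN ρ ∨ B.SatN ρ
  | imp A B, ρ => A.SatN ρ → B.SatN ρ
  | all A, ρ => ∀ n : ℕ, A.SatN (econs n ρ)
  | ex A, ρ => ∃ n : ℕ, A.SatN (econs n ρ)

/-- a Gödel numbering of arithmetic formulas. -/
def code : AForm → ℕ
  | eq t u => Nat.pair 0 (Nat.pair t.code u.code)
  | lt t u => Nat.pair 1 (Nat.pair t.code u.code)
  | fal => Nat.pair 2 0
  | and A B => Nat.pair 3 (Nat.pair A.code B.code)
  | or A B => Nat.pair 4 (Nat.pair A.code B.code)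
  | imp A B => Nat.pair 5 (Nat.pair A.code B.code)
  | all A => Nat.pair 6 A.code
  | ex A => Nat.pair 7 A.code

end AForm

/-- Δ₀ formulas: only bounded quantifiers. -/
inductive Delta0 : AForm → Prop
  | eq (t u) : Delta0 (.eq t u)
  | lt (t u) : Delta0 (.lt t u)
  | fal : Delta0 .fal
  | and {A B} : Delta0 A → Delta0 B → Delta0 (.and A B)
  | or {A B} : Delta0 A → Delta0 B → Delta0 (.or A B)
  | imp {A B} : Delta0 A → Delta0 B → Delta0 (.imp A B)
  | ball (t : ATerm) {A} : Delta0 A → Delta0 (.all (.imp (.lt (.var 0) (t.lift 0)) A))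
  | bex (t : ATerm) {A} : Delta0 A → Delta0 (.ex (.and (.lt (.var 0) (t.lift 0)) A))

/-- Σ₁ formulas: existential quantifiers over a Δ₀ matrix. -/
inductive Sigma1 : AForm → Prop
  | of_delta0 {A} : Delta0 A → Sigma1 A
  | ex {A} : Sigma1 A → Sigma1 (.ex A)

/-- a Hilbert-style proof system for intuitionistic first-order logic with equality,
from a set `T` of (closed) non-logical axioms. -/
inductive Prf (T : AForm → Prop) : AForm → Prop
  | hyp {A} : T A → Prf T A
  | mp {A B} : Prf T (.imp A B) → Prf T A → Prf T B
  | gen {A} : Prf T A → Prf T (.all A)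
  | k (A B) : Prf T (.imp A (.imp B A))
  | s (A B C) : Prf T (.imp (.imp A (.imp B C)) (.imp (.imp A B) (.imp A C)))
  | pair (A B) : Prf T (.imp A (.imp B (.and A B)))
  | fst (A B) : Prf T (.imp (.and A B) A)
  | snd (A B) : Prf T (.imp (.and A B) B)
  | inl (A B) : Prf T (.imp A (.or A B))
  | inr (A B) : Prf T (.imp B (.or A B))
  | cases (A B C) : Prf T (.imp (.imp A C) (.imp (.imp B C) (.imp (.or A B) C)))
  | exfalso (A) : Prf T (.imp .fal A)
  | allE (A : AForm) (t : ATerm) : Prf T (.imp (.all A) (A.subst 0 t))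
  | allShift (A B : AForm) : Prf T (.imp (.all (.imp (B.lift 0) A)) (.imp B (.all A)))
  | exI (A : AForm) (t : ATerm) : Prf T (.imp (A.subst 0 t) (.ex A))
  | exE (A B : AForm) : Prf T (.imp (.all (.imp A (B.lift 0))) (.imp (.ex A) B))
  | eqRefl : Prf T (.all (.eq (.var 0) (.var 0)))
  | leibniz (A : AForm) : Prf T (.all (.all (.imp (.eq (.var 1) (.var 0))
      (.imp (((A.lift 1).lift 1).substId 0 (.var 1))
            (((A.lift 1).lift 1).substId 0 (.var 0))))))

/-- iterated universal quantification. -/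
def ucAux : ℕ → AForm → AForm
  | 0, A => A
  | k + 1, A => ucAux k (.all A)

/-- universal closure. -/
def uc (A : AForm) : AForm := ucAux A.fvB A

/-- the induction axiom for the formula A (induction on variable 0). -/
def indAx (A : AForm) : AForm :=
  uc (.imp (.and (A.subst 0 .zero) (.all (.imp A (A.substId 0 (.succ (.var 0))))))
      (.all A))

/-- the axioms Q1–Q8. -/
inductive QAx : AForm → Prop
  | q1 : QAx (.all (.imp (.eq (.succ (.var 0)) .zero) .fal))
  | q2 : QAx (.all (.all (.imp (.eq (.succ (.var 1)) (.succ (.var 0))) (.eq (.var 1) (.var 0)))))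
  | q3 : QAx (.all (.or (.eq (.var 0) .zero) (.ex (.eq (.succ (.var 0)) (.var 1)))))
  | q4 : QAx (.all (.eq (.add (.var 0) .zero) (.var 0)))
  | q5 : QAx (.all (.all (.eq (.add (.var 1) (.succ (.var 0))) (.succ (.add (.var 1) (.var 0))))))
  | q6 : QAx (.all (.eq (.mul (.var 0) .zero) .zero))
  | q7 : QAx (.all (.all (.eq (.mul (.var 1) (.succ (.var 0))) (.add (.mul (.var 1) (.var 0)) (.var 1)))))
  | q8 : QAx (.all (.all (AForm.iffA (.lt (.var 1) (.var 0))
      (.ex (.eq (.add (.var 2) (.succ (.var 0))) (.var 1))))))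

/-- the axioms of Heyting Arithmetic: Q1–Q8 and full induction. -/
def HAAx : AForm → Prop := fun A => QAx A ∨ ∃ B : AForm, A = indAx B

/-- provability in HA. -/
def HAProves : AForm → Prop := Prf HAAx

/-- interface for the standard arithmetized provability predicate `Prov_HA` of HA:
`Pr A` is the Σ₁ sentence `Prov_HA(⌜A⌝)`. -/
structure ProvPred where
  Pr : AForm → AForm
  sentence : ∀ A, (Pr A).vlt 0
  sigma1 : ∀ A, Sigma1 (Pr A)
  correct : ∀ A : AForm, ((Pr A).SatN (fun _ => 0) ↔ HAProves A)
  dNec : ∀ A, HAProves A → HAProves (Pr A)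
  dK : ∀ A B, HAProves (.imp (Pr (.imp A B)) (.imp (Pr A) (Pr B)))
  dSigma : ∀ A, Sigma1 A → A.vlt 0 → HAProves (.imp A (Pr A))
  dLob : ∀ A, HAProves (.imp (Pr (.imp (Pr A) A)) (Pr A))

/-- the arithmetical interpretation `σ_HA` of modal formulas determined by a
substitution `σ` and a provability predicate `Pr`. -/
def interp (Pr : AForm → AForm) (σ : ℕ → AForm) : Form → AForm
  | .var n => σ n
  | .bot => .fal
  | .and A B => .and (interp Pr σ A) (interp Pr σ B)
  | .or A B => .or (interp Pr σ A) (interp Pr σ B)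
  | .imp A B => .imp (interp Pr σ A) (interp Pr σ B)
  | .box A => Pr (interp Pr σ A)

/-- σ is an arithmetical substitution: it maps atomic variables to sentences. -/
def ArithSubst (σ : ℕ → AForm) : Prop := ∀ n, (σ n).vlt 0

/-- σ is a Σ₁-substitution: it maps atomic variables to Σ₁ sentences. -/
def Sigma1Subst (σ : ℕ → AForm) : Prop := ∀ n, Sigma1 (σ n) ∧ (σ n).vlt 0

/-! ## The theories HAₓ and indexed provability (for the refined Leivant principle) -/

/-- induction formulas of the special shape (A→B)→B with A, B ∈ Σ₁. -/
def shapeInd (A : AForm) : Prop := ∃ S Tf : AForm, Sigma1 S ∧ Sigma1 Tf ∧ A = .imp (.imp S Tf) Tf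

/-- the axioms of HAₓ: Q1-Q8, and induction restricted to formulas of the shape
(A→B)→B with A,B ∈ Σ₁ or with Gödel number ≤ x. -/
def HAxAx (x : ℕ) : AForm → Prop := fun A =>
  QAx A ∨ ∃ B : AForm, (shapeInd B ∨ B.code ≤ x) ∧ A = indAx B

/-- interface for the arithmetized bounded provability predicates `□ₓ`:
`PrB A` is the Σ₁ formula with free variable 0 expressing `Prov_{HA_{v₀}}(⌜A⌝)`, and
`PrBSub A` (for `A` with one free variable) is the Σ₁ formula with free variables 0, 1
expressing `Prov_{HA_{v₀}}(⌜A(v̇₁)⌝)`. -/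
structure BddProvPred where
  PrB : AForm → AForm
  PrBSub : AForm → AForm
  PrB_vlt : ∀ A, (PrB A).vlt 1
  PrB_sigma1 : ∀ A, Sigma1 (PrB A)
  PrB_correct : ∀ (A : AForm) (n : ℕ),
    ((PrB A).SatN (fun i => if i = 0 then n else 0) ↔ Prf (HAxAx n) A)
  PrBSub_vlt : ∀ A, (PrBSub A).vlt 2
  PrBSub_sigma1 : ∀ A, Sigma1 (PrBSub A)
  PrBSub_correct : ∀ (A : AForm) (n m : ℕ),
    ((PrBSub A).SatN (fun i => if i = 0 then n else m) ↔ Prf (HAxAx n) (A.subst 0 (numeral m)))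

/-! ## First-order Kripke models of HA -/

/-- a first-order Kripke model for the language of arithmetic over the frame `(W, le)`:
each node carries a classical structure, and the structure at a smaller node is a weak
substructure of the structure at a bigger one (realized as subsets of a common universe,
closed under the operations). -/
structure FOKripke (W : Type) (le : W → W → Prop) where
  U : Type
  dom : W → Set U
  zero : U
  succ : U → U
  add : U → U → U
  mul : U → U → U
  ltR : U → U → Prop
  dom_mono : ∀ {a b : W}, le a b → dom a ⊆ dom b
  zero_mem : ∀ a, zero ∈ dom a
  succ_mem : ∀ a x, x ∈ dom a → succ x ∈ dom a
  add_mem : ∀ a x y, x ∈ dom a → y ∈ dom a → add x y ∈ dom a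
  mul_mem : ∀ a x y, x ∈ dom a → y ∈ dom a → mul x y ∈ dom a

/-- evaluation of a term in a first-order Kripke model. -/
def tevalK {W : Type} {le : W → W → Prop} (M : FOKripke W le) (ρ : ℕ → M.U) : ATerm → M.U
  | .var n => ρ n
  | .zero => M.zero
  | .succ t => M.succ (tevalK M ρ t)
  | .add t u => M.add (tevalK M ρ t) (tevalK M ρ u)
  | .mul t u => M.mul (tevalK M ρ t) (tevalK M ρ u)

/-- the forcing relation of a first-order Kripke model. -/
def FOForces {W : Type} {le : W → W → Prop} (M : FOKripke W le) :
    AForm → W → (ℕ → M.U) → Prop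
  | .eq t u, _, ρ => tevalK M ρ t = tevalK M ρ u
  | .lt t u, _, ρ => M.ltR (tevalK M ρ t) (tevalK M ρ u)
  | .fal, _, _ => False
  | .and A B, w, ρ => FOForces M A w ρ ∧ FOForces M B w ρ
  | .or A B, w, ρ => FOForces M A w ρ ∨ FOForces M B w ρ
  | .imp A B, w, ρ => ∀ v, le w v → FOForces M A v ρ → FOForces M B v ρ
  | .all A, w, ρ => ∀ v, le w v → ∀ b ∈ M.dom v, FOForces M A v (econs b ρ)
  | .ex A, w, ρ => ∃ b ∈ M.dom w, FOForces M A w (econs b ρ)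

/-- the Kripke model forces all axioms of HA. -/
def ForcesHA {W : Type} {le : W → W → Prop} (M : FOKripke W le) : Prop :=
  ∀ A : AForm, HAAx A → ∀ w : W, FOForces M A w (fun _ => M.zero)

end PLHA

namespace PLHA
namespace NNILal

open Classical

/-- Derivability in IPC (over the modal language) from a list of hypotheses. -/
inductive Der : List Form → Form → Prop
  | hyp {L A} : A ∈ L → Der L A
  | ax {L A} : IpcAx A → Der L A
  | mp {L A B} : Der L (.imp A B) → Der L A → Der L B

namespace Der

theorem weaken {L L' : List Form} {A} (h : Der L A) (hs : ∀ x ∈ L, x ∈ L') : Der L' A := by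
  induction h with
  | hyp h => exact .hyp (hs _ h)
  | ax h => exact .ax h
  | mp _ _ ih1 ih2 => exact .mp ih1 ih2

theorem imp_self (L A) : Der L (.imp A A) :=
  .mp (.mp (.ax (.a2 A (.imp A A) A)) (.ax (.a1 A (.imp A A)))) (.ax (.a1 A A))

theorem ded {L A B} (h : Der (A :: L) B) : Der L (.imp A B) := by
  induction h with
  | hyp h =>
    rcases List.mem_cons.1 h with rfl | h
    · exact imp_self L _
    · exact .mp (.ax (.a1 _ _)) (.hyp h)
  | ax h => exact .mp (.ax (.a1 _ _)) (.ax h)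
  | mp _ _ ih1 ih2 => exact .mp (.mp (.ax (.a2 _ _ _)) ih1) ih2

theorem unded {L A B} (h : Der L (.imp A B)) : Der (A :: L) B :=
  .mp (h.weaken (fun x hx => List.mem_cons_of_mem _ hx)) (.hyp (List.mem_cons_self))

theorem cut {L A B} (h1 : Der L A) (h2 : Der (A :: L) B) : Der L B := .mp (ded h2) h1

theorem ofDer {L L' : List Form} {A} (h : Der L A) (hs : ∀ x ∈ L, Der L' x) : Der L' A := by
  induction h with
  | hyp h => exact hs _ h
  | ax h => exact .ax h
  | mp _ _ ih1 ih2 => exact .mp ih1 ih2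

theorem andI {L A B} (h1 : Der L A) (h2 : Der L B) : Der L (.and A B) :=
  .mp (.mp (.ax (.a3 _ _)) h1) h2
theorem andE1 {L A B} (h : Der L (.and A B)) : Der L A := .mp (.ax (.a4 _ _)) h
theorem andE2 {L A B} (h : Der L (.and A B)) : Der L B := .mp (.ax (.a5 _ _)) h
theorem orI1 {L A B} (h : Der L A) : Der L (.or A B) := .mp (.ax (.a6 _ _)) h
theorem orI2 {L A B} (h : Der L B) : Der L (.or A B) := .mp (.ax (.a7 _ _)) h
theorem orE {L A B C} (h : Der L (.or A B)) (h1 : Der L (.imp A C)) (h2 : Der L (.imp B C)) :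
    Der L C := .mp (.mp (.mp (.ax (.a8 _ _ _)) h1) h2) h
theorem exf {L A} (h : Der L .bot) : Der L A := .mp (.ax (.a9 _)) h
theorem top_ (L) : Der L Form.top := imp_self L .bot

end Der

theorem ipcb_iff_der {A : Form} : IPCbProves A ↔ Der [] A := by
  constructor
  · intro h
    induction h with
    | ax h => exact h.elim
    | ipc h => exact .ax h
    | mp _ _ ih1 ih2 => exact .mp ih1 ih2
    | nec h _ _ => simp at h
  · intro h
    induction h with
    | hyp h => simp at h
    | ax h => exact .ipc h
    | mp _ _ ih1 ih2 => exact .mp ih1 ih2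

/-! ### Kripke models (for IPC over the modal language: boxed formulas are atoms) -/

structure KM : Type 1 where
  W : Type
  le : W → W → Prop
  refl : ∀ w, le w w
  trans : ∀ {a b c}, le a b → le b c → le a c
  V : W → Form → Prop
  mono : ∀ {a b f}, le a b → V a f → V b f

def force (M : KM) : M.W → Form → Prop
  | w, .var n => M.V w (.var n)
  | _, .bot => False
  | w, .and A B => force M w A ∧ force M w B
  | w, .or A B => force M w A ∨ force M w B
  | w, .imp A B => ∀ v, M.le w v → force M v A → force M v B
  | w, .box A => M.V w (.box A)

theorem force_persist {M : KM} {A : Form} :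
    ∀ {w v : M.W}, M.le w v → force M w A → force M v A := by
  induction A with
  | var n => exact fun h hf => M.mono h hf
  | bot => exact fun _ hf => hf.elim
  | and A B ihA ihB => exact fun h hf => ⟨ihA h hf.1, ihB h hf.2⟩
  | or A B ihA ihB => exact fun h hf => hf.elim (fun x => Or.inl (ihA h x)) (fun x => Or.inr (ihB h x))
  | imp A B ihA ihB => exact fun h hf v hv ha => hf v (M.trans h hv) ha
  | box A ih => exact fun h hf => M.mono h hf

theorem ax_valid {M : KM} {w : M.W} {A : Form} (h : IpcAx A) : force M w A := by
  cases h with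
  | a1 A B => exact fun v _ hA u hu _ => force_persist hu hA
  | a2 A B C =>
    intro v _ h1 u hu h2 t ht hA
    exact h1 t (M.trans hu ht) hA t (M.refl t) (h2 t ht hA)
  | a3 A B => exact fun v _ hA u hu hB => ⟨force_persist hu hA, hB⟩
  | a4 A B => exact fun v _ h => h.1
  | a5 A B => exact fun v _ h => h.2
  | a6 A B => exact fun v _ h => Or.inl h
  | a7 A B => exact fun v _ h => Or.inr h
  | a8 A B C =>
    intro v _ h1 u hu h2 t ht hAB
    exact hAB.elim (fun hA => h1 t (M.trans hu ht) hA) (fun hB => h2 t ht hB)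
  | a9 A => exact fun v _ h => h.elim

theorem sound {L A} (h : Der L A) (M : KM) (w : M.W) (hL : ∀ B ∈ L, force M w B) :
    force M w A := by
  induction h with
  | hyp h => exact hL _ h
  | ax h => exact ax_valid h
  | mp _ _ ih1 ih2 => exact ih1 w (M.refl w) ih2

end NNILal
end PLHA
namespace PLHA
namespace NNILal

open Classical

/-! ### Completeness via prime theories -/

def SDer (Γ : Set Form) (A : Form) : Prop :=
  ∃ L : List Form, (∀ B ∈ L, B ∈ Γ) ∧ Der L A

theorem SDer.of_mem {Γ : Set Form} {A} (h : A ∈ Γ) : SDer Γ A :=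
  ⟨[A], by simpa using h, .hyp (by simp)⟩

theorem SDer.mono {Γ Γ' : Set Form} {A} (h : SDer Γ A) (hs : Γ ⊆ Γ') : SDer Γ' A := by
  obtain ⟨L, hL, hd⟩ := h
  exact ⟨L, fun B hB => hs (hL B hB), hd⟩

theorem SDer.mp {Γ : Set Form} {A B} (h1 : SDer Γ (.imp A B)) (h2 : SDer Γ A) : SDer Γ B := by
  obtain ⟨L1, hL1, hd1⟩ := h1
  obtain ⟨L2, hL2, hd2⟩ := h2
  refine ⟨L1 ++ L2, ?_, .mp (hd1.weaken ?_) (hd2.weaken ?_)⟩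
  · intro B hB; rcases List.mem_append.1 hB with h | h
    · exact hL1 _ h
    · exact hL2 _ h
  · intro x hx; exact List.mem_append.2 (Or.inl hx)
  · intro x hx; exact List.mem_append.2 (Or.inr hx)

/-- If `SDer (insert A Γ) B` then `SDer Γ (A → B)`. -/
theorem SDer.ded {Γ : Set Form} {A B} (h : SDer (insert A Γ) B) : SDer Γ (.imp A B) := by
  obtain ⟨L, hL, hd⟩ := h
  classical
  refine ⟨L.filter (fun x => decide (x ∈ Γ)), ?_, ?_⟩
  · intro B hB
    have := List.mem_filter.1 hB
    exact of_decide_eq_true this.2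
  · refine Der.ded (hd.weaken ?_)
    intro x hx
    by_cases hxΓ : x ∈ Γ
    · exact List.mem_cons_of_mem _ (List.mem_filter.2 ⟨hx, by simp [hxΓ]⟩)
    · have : x = A := by
        rcases hL x hx with h | h
        · exact h
        · exact absurd h hxΓ
      simp [this]

theorem SDer.cut {Γ : Set Form} {A B} (h1 : SDer Γ A) (h2 : SDer (insert A Γ) B) :
    SDer Γ B := (h2.ded).mp h1

theorem SDer.orE {Γ : Set Form} {A B C} (h : SDer Γ (.or A B)) (h1 : SDer Γ (.imp A C))
    (h2 : SDer Γ (.imp B C)) : SDer Γ C := by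
  obtain ⟨L, hL, hd⟩ := h
  obtain ⟨L1, hL1, hd1⟩ := h1
  obtain ⟨L2, hL2, hd2⟩ := h2
  refine ⟨L ++ L1 ++ L2, ?_, ?_⟩
  · intro x hx; simp only [List.mem_append] at hx
    rcases hx with (h | h) | h
    exacts [hL _ h, hL1 _ h, hL2 _ h]
  · refine Der.orE (hd.weaken ?_) (hd1.weaken ?_) (hd2.weaken ?_) <;>
      (intro x hx; simp [hx])

structure IsPrime (Γ : Set Form) : Prop where
  closed : ∀ {A}, SDer Γ A → A ∈ Γ
  nobot : Form.bot ∉ Γ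
  orp : ∀ {A B}, Form.or A B ∈ Γ → A ∈ Γ ∨ B ∈ Γ

theorem sder_union_chain {c : Set (Set Form)} (hc : IsChain (· ⊆ ·) c) (hne : c.Nonempty)
    {A} (h : SDer (⋃₀ c) A) : ∃ Γ ∈ c, SDer Γ A := by
  obtain ⟨L, hL, hd⟩ := h
  -- find a single element of the chain containing all of L
  suffices hs : ∃ Γ ∈ c, ∀ B ∈ L, B ∈ Γ by
    obtain ⟨Γ, hΓ, hall⟩ := hs
    exact ⟨Γ, hΓ, L, hall, hd⟩
  clear hd
  induction L with
  | nil => obtain ⟨Γ, hΓ⟩ := hne; exact ⟨Γ, hΓ, by simp⟩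
  | cons B L ih =>
    obtain ⟨Γ, hΓ, hall⟩ := ih (fun x hx => hL x (List.mem_cons_of_mem _ hx))
    obtain ⟨Δ, hΔ, hBΔ⟩ := Set.mem_sUnion.1 (hL B (List.mem_cons_self))
    rcases hc.total hΓ hΔ with hsub | hsub
    · exact ⟨Δ, hΔ, by
        intro x hx
        rcases List.mem_cons.1 hx with rfl | hx
        · exact hBΔ
        · exact hsub (hall x hx)⟩
    · exact ⟨Γ, hΓ, by
        intro x hx
        rcases List.mem_cons.1 hx with rfl | hx
        · exact hsub hBΔ
        · exact hall x hx⟩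

theorem lindenbaum {Γ : Set Form} {C : Form} (h : ¬ SDer Γ C) :
    ∃ Δ, Γ ⊆ Δ ∧ IsPrime Δ ∧ ¬ SDer Δ C := by
  classical
  obtain ⟨Δ, hΓΔ0, hmax⟩ := zorn_subset_nonempty {Δ | Γ ⊆ Δ ∧ ¬ SDer Δ C}
    (fun c hcsub hchain hne => by
      refine ⟨⋃₀ c, ⟨?_, ?_⟩, fun Δ hΔ => Set.subset_sUnion_of_mem hΔ⟩
      · obtain ⟨Δ, hΔ⟩ := hne
        exact (hcsub hΔ).1.trans (Set.subset_sUnion_of_mem hΔ)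
      · intro hsd
        obtain ⟨Δ, hΔ, hsd'⟩ := sder_union_chain hchain hne hsd
        exact (hcsub hΔ).2 hsd') Γ ⟨subset_rfl, h⟩
  obtain ⟨hΓΔ, hnd⟩ := hmax.prop
  have hclosed : ∀ {A}, SDer Δ A → A ∈ Δ := by
    intro A hA
    by_contra hAΔ
    have hne : Δ ≠ insert A Δ := fun he => hAΔ (he ▸ Set.mem_insert _ _)
    have : insert A Δ ∈ {Δ | Γ ⊆ Δ ∧ ¬ SDer Δ C} := by
      refine ⟨hΓΔ.trans (Set.subset_insert _ _), fun hc => hnd (hA.cut hc)⟩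
    have := hmax.eq_of_subset this (Set.subset_insert _ _)
    exact hne this
  refine ⟨Δ, hΓΔ, ⟨hclosed, ?_, ?_⟩, hnd⟩
  · intro hbot
    exact hnd ⟨[.bot], by simpa using hbot, Der.exf (.hyp (by simp))⟩
  · intro A B hAB
    by_contra hneg
    push_neg at hneg
    obtain ⟨hA, hB⟩ := hneg
    have hsdA : SDer (insert A Δ) C := by
      by_contra hc
      have : insert A Δ ∈ {Δ | Γ ⊆ Δ ∧ ¬ SDer Δ C} :=
        ⟨hΓΔ.trans (Set.subset_insert _ _), hc⟩
      have := hmax.eq_of_subset this (Set.subset_insert _ _)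
      exact hA (this ▸ Set.mem_insert _ _)
    have hsdB : SDer (insert B Δ) C := by
      by_contra hc
      have : insert B Δ ∈ {Δ | Γ ⊆ Δ ∧ ¬ SDer Δ C} :=
        ⟨hΓΔ.trans (Set.subset_insert _ _), hc⟩
      have := hmax.eq_of_subset this (Set.subset_insert _ _)
      exact hB (this ▸ Set.mem_insert _ _)
    exact hnd ((SDer.of_mem hAB).orE hsdA.ded hsdB.ded)

end NNILal
end PLHA
namespace PLHA
namespace NNILal


theorem singsub {Γ : Set Form} {A : Form} (h : A ∈ Γ) : ∀ x ∈ [A], x ∈ Γ := by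
  intro x hx; rw [List.mem_singleton.1 hx]; exact h

/-- the canonical model. -/
def canon : KM where
  W := {Γ : Set Form // IsPrime Γ}
  le Γ Δ := Γ.1 ⊆ Δ.1
  refl _ := subset_rfl
  trans h1 h2 := h1.trans h2
  V Γ f := f ∈ Γ.1
  mono h hf := h hf

theorem truth : ∀ (A : Form) (Γ : canon.W), force canon Γ A ↔ A ∈ Γ.1 := by
  intro A
  induction A with
  | var n => exact fun Γ => Iff.rfl
  | bot => exact fun Γ => ⟨fun h => h.elim, fun h => Γ.2.nobot h⟩
  | box B ih => exact fun Γ => Iff.rfl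
  | and A B ihA ihB =>
    intro Γ
    constructor
    · intro ⟨hA, hB⟩
      refine Γ.2.closed ?_
      obtain ⟨L1, hL1, hd1⟩ := SDer.of_mem ((ihA Γ).1 hA)
      obtain ⟨L2, hL2, hd2⟩ := SDer.of_mem ((ihB Γ).1 hB)
      refine ⟨L1 ++ L2, ?_, Der.andI (hd1.weaken ?_) (hd2.weaken ?_)⟩ <;>
        first
        | (intro x hx; rcases List.mem_append.1 hx with h | h; exacts [hL1 _ h, hL2 _ h])
        | (intro x hx; simp [hx])
    · intro h
      have hA : SDer Γ.1 A := ⟨[.and A B], singsub h, Der.andE1 (.hyp (List.mem_singleton_self (Form.and A B)))⟩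
      have hB : SDer Γ.1 B := ⟨[.and A B], singsub h, Der.andE2 (.hyp (List.mem_singleton_self (Form.and A B)))⟩
      exact ⟨(ihA Γ).2 (Γ.2.closed hA), (ihB Γ).2 (Γ.2.closed hB)⟩
  | or A B ihA ihB =>
    intro Γ
    constructor
    · rintro (h | h)
      · exact Γ.2.closed ⟨[A], singsub ((ihA Γ).1 h), Der.orI1 (.hyp (List.mem_singleton_self A))⟩
      · exact Γ.2.closed ⟨[B], singsub ((ihB Γ).1 h), Der.orI2 (.hyp (List.mem_singleton_self B))⟩
    · intro h
      rcases Γ.2.orp h with h | h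
      · exact Or.inl ((ihA Γ).2 h)
      · exact Or.inr ((ihB Γ).2 h)
  | imp A B ihA ihB =>
    intro Γ
    constructor
    · intro hf
      by_contra hmem
      have hnsd : ¬ SDer (insert A Γ.1) B := by
        intro h
        exact hmem (Γ.2.closed h.ded)
      obtain ⟨Δ, hsub, hprime, hnd⟩ := lindenbaum hnsd
      have hBΔ : B ∉ Δ := fun h => hnd (SDer.of_mem h)
      have hAΔ : A ∈ Δ := hsub (Set.mem_insert _ _)
      have := hf ⟨Δ, hprime⟩ (fun x hx => hsub (Set.mem_insert_of_mem _ hx))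
        ((ihA ⟨Δ, hprime⟩).2 hAΔ)
      exact hBΔ ((ihB ⟨Δ, hprime⟩).1 this)
    · intro h Δ hle hA
      refine (ihB Δ).2 (Δ.2.closed ?_)
      exact (SDer.of_mem (hle h)).mp (SDer.of_mem ((ihA Δ).1 hA))

theorem completeness {B A : Form} (h : ¬ Der [B] A) :
    ∃ (Γ : canon.W), force canon Γ B ∧ ¬ force canon Γ A := by
  have hnsd : ¬ SDer {B} A := by
    intro ⟨L, hL, hd⟩
    exact h (hd.weaken (fun x hx => by simpa using hL x hx))
  obtain ⟨Δ, hsub, hprime, hnd⟩ := lindenbaum hnsd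
  refine ⟨⟨Δ, hprime⟩, (truth B _).2 (hsub rfl), ?_⟩
  intro hf
  exact hnd (SDer.of_mem ((truth A _).1 hf))

end NNILal
end PLHA
namespace PLHA
namespace NNILal

/-! ### Subsimulations and NNIL transfer -/

/-- `Z` is a subsimulation from `N` into `M`: related points have the same atoms,
and every `N`-successor of a related point is related to some `M`-successor. -/
def Sub (N M : KM) (Z : N.W → M.W → Prop) : Prop :=
  ∀ ⦃x y⦄, Z x y →
    (∀ a, N.V x a ↔ M.V y a) ∧ ∀ x', N.le x x' → ∃ y', M.le y y' ∧ Z x' y'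

theorem rho0_transfer {N M : KM} {Z} (hZ : Sub N M Z) {U : Form} (hU : U.rho = 0) :
    ∀ {x y}, Z x y → (force N x U ↔ force M y U) := by
  induction U with
  | var n => exact fun h => (hZ h).1 _
  | bot => exact fun _ => Iff.rfl
  | box B => exact fun h => (hZ h).1 _
  | and A B ihA ihB =>
    intro x y h
    simp only [Form.rho, Nat.max_eq_zero_iff] at hU
    exact and_congr (ihA hU.1 h) (ihB hU.2 h)
  | or A B ihA ihB =>
    intro x y h
    simp only [Form.rho, Nat.max_eq_zero_iff] at hU
    exact or_congr (ihA hU.1 h) (ihB hU.2 h)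
  | imp A B ihA ihB =>
    exfalso
    simp only [Form.rho, Nat.max_eq_zero_iff] at hU
    omega

theorem nnil_transfer {N M : KM} {Z} (hZ : Sub N M Z) {S : Form} (hS : S.rho ≤ 1) :
    ∀ {x y}, Z x y → force M y S → force N x S := by
  induction S with
  | var n => exact fun h hf => ((hZ h).1 _).2 hf
  | bot => exact fun _ hf => hf
  | box B => exact fun h hf => ((hZ h).1 _).2 hf
  | and A B ihA ihB =>
    intro x y h hf
    simp only [Form.rho, max_le_iff] at hS
    exact ⟨ihA hS.1 h hf.1, ihB hS.2 h hf.2⟩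
  | or A B ihA ihB =>
    intro x y h hf
    simp only [Form.rho, max_le_iff] at hS
    exact hf.elim (fun hf => Or.inl (ihA hS.1 h hf)) (fun hf => Or.inr (ihB hS.2 h hf))
  | imp A B ihA ihB =>
    intro x y h hf x' hx' hA
    simp only [Form.rho, max_le_iff] at hS
    have hA0 : A.rho = 0 := by omega
    obtain ⟨y', hy', hZ'⟩ := (hZ h).2 x' hx'
    have hB := hf y' hy' ((rho0_transfer hZ hA0 hZ').1 hA)
    exact ihB hS.2 hZ' hB

/-- a pointed model reachable (in the approximation sense) from `(M, w)`:
it sits subsimulation-below some successor of `w` and forces `T` globally. -/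
def Reach (M : KM) (w : M.W) (N : KM) (u : N.W) (T : List Form) : Prop :=
  ∃ (w' : M.W) (Z : N.W → M.W → Prop),
    M.le w w' ∧ Sub N M Z ∧ Z u w' ∧ ∀ (x : N.W), ∀ a ∈ T, force N x a

theorem Reach.shift {M : KM} {w w' : M.W} {N u T T'} (h : Reach M w' N u T')
    (hw : M.le w w') (hT : ∀ a ∈ T, a ∈ T') : Reach M w N u T := by
  obtain ⟨w'', Z, hle, hsub, hZ, hTg⟩ := h
  exact ⟨w'', Z, M.trans hw hle, hsub, hZ, fun x a ha => hTg x a (hT a ha)⟩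

end NNILal
end PLHA
namespace PLHA
namespace NNILal

/-! ### The algorithm -/

def sz : Form → ℕ
  | .var _ => 1
  | .bot => 1
  | .box _ => 1
  | .and A B => sz A + sz B + 2
  | .or A B => sz A + sz B + 2
  | .imp A B => sz A + sz B + 1

theorem sz_pos (A : Form) : 1 ≤ sz A := by
  cases A <;> simp [sz] <;> omega

def splits {α : Type*} : List α → List (α × List α)
  | [] => []
  | a :: l => (a, l) :: (splits l).map (fun p => (p.1, a :: p.2))

theorem splits_perm {α : Type*} : ∀ {X : List α} {p : α × List α},
    p ∈ splits X → X.Perm (p.1 :: p.2) := by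
  intro X
  induction X with
  | nil => intro p hp; simp [splits] at hp
  | cons a l ih =>
    intro p hp
    rcases List.mem_cons.1 hp with rfl | hp
    · exact List.Perm.refl _
    · obtain ⟨q, hq, rfl⟩ := List.mem_map.1 hp
      exact ((ih hq).cons a).trans (List.Perm.swap q.1 a q.2)

theorem splits_surj {α : Type*} : ∀ {X : List α} {a : α}, a ∈ X → ∃ r, (a, r) ∈ splits X := by
  intro X
  induction X with
  | nil => simp
  | cons b l ih =>
    intro a ha
    rcases List.mem_cons.1 ha with rfl | ha
    · exact ⟨l, List.mem_cons_self⟩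
    · obtain ⟨r, hr⟩ := ih ha
      exact ⟨b :: r, List.mem_cons_of_mem _ (List.mem_map.2 ⟨(a, r), hr, rfl⟩)⟩

def msX (X : List (Form × Form)) : ℕ := (X.map (fun p => 4 ^ (sz p.1 + sz p.2))).sum
def msL (Δ : List Form) : ℕ := (Δ.map (fun D => 4 ^ sz D)).sum

theorem msX_cons (p : Form × Form) (X) : msX (p :: X) = 4 ^ (sz p.1 + sz p.2) + msX X := rfl
theorem msL_cons (D : Form) (Δ) : msL (D :: Δ) = 4 ^ sz D + msL Δ := rfl

theorem msX_perm {X Y : List (Form × Form)} (h : X.Perm Y) : msX X = msX Y :=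
  (h.map _).sum_eq

theorem msX_splits {X : List (Form × Form)} {p} (h : p ∈ splits X) :
    msX X = 4 ^ (sz p.1.1 + sz p.1.2) + msX p.2 := by
  have := msX_perm (splits_perm h)
  simpa [msX_cons] using this

end NNILal
end PLHA
namespace PLHA
namespace NNILal

theorem pow4_le {a b : ℕ} (h : a ≤ b) : 4 ^ a ≤ 4 ^ b :=
  Nat.pow_le_pow_right (by norm_num) h

theorem pow4_lt {a b : ℕ} (h : a < b) : 4 ^ a < 4 ^ b :=
  Nat.pow_lt_pow_right (by norm_num) h

theorem pow4_pos (a : ℕ) : 0 < 4 ^ a := Nat.pow_pos (by norm_num)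

theorem pow4_add_le {a b : ℕ} (ha : 1 ≤ a) (hb : 1 ≤ b) : 4 ^ a + 4 ^ b ≤ 4 ^ (a + b) := by
  rw [pow_add]
  have h4a : 4 ≤ 4 ^ a := by calc 4 = 4 ^ 1 := rfl
                                 _ ≤ 4 ^ a := pow4_le ha
  have h4b : 4 ≤ 4 ^ b := by calc 4 = 4 ^ 1 := rfl
                                 _ ≤ 4 ^ b := pow4_le hb
  nlinarith

theorem msX_nil : msX [] = 0 := rfl
theorem msL_nil : msL [] = 0 := rfl

theorem pow4_succ (a : ℕ) : 4 ^ (a + 1) = 4 ^ a * 4 := pow_succ 4 a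

theorem dDrop (D : Form) (Δ : List Form) : msL Δ < msL (D :: Δ) := by
  rw [msL_cons]; have := pow4_pos (sz D); omega

theorem dA (D₁ D₂ : Form) (Δ : List Form) : msL (D₁ :: D₂ :: Δ) < msL (.and D₁ D₂ :: Δ) := by
  simp only [msL_cons, sz]
  have h := pow4_add_le (sz_pos D₁) (sz_pos D₂)
  have h2 : 4 ^ (sz D₁ + sz D₂) < 4 ^ (sz D₁ + sz D₂ + 2) := pow4_lt (by omega)
  omega

theorem dO1 (D₁ D₂ : Form) (Δ : List Form) : msL (D₁ :: Δ) < msL (.or D₁ D₂ :: Δ) := by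
  simp only [msL_cons, sz]
  have h : 4 ^ (sz D₁) < 4 ^ (sz D₁ + sz D₂ + 2) := pow4_lt (by have := sz_pos D₂; omega)
  omega

theorem dO2 (D₁ D₂ : Form) (Δ : List Form) : msL (D₂ :: Δ) < msL (.or D₁ D₂ :: Δ) := by
  simp only [msL_cons, sz]
  have h : 4 ^ (sz D₂) < 4 ^ (sz D₁ + sz D₂ + 2) := pow4_lt (by have := sz_pos D₁; omega)
  omega

theorem dPush (E F : Form) (X : List (Form × Form)) (Δ : List Form) :
    msX ((E, F) :: X) + msL Δ < msX X + msL (.imp E F :: Δ) := by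
  simp only [msX_cons, msL_cons, sz]
  have h : 4 ^ (sz E + sz F) < 4 ^ (sz E + sz F + 1) := pow4_lt (by omega)
  omega

theorem dIA (A B K : Form) (Δ : List Form) :
    msL (.imp A (.imp B K) :: Δ) < msL (.imp (.and A B) K :: Δ) := by
  simp only [msL_cons, sz]
  have h : 4 ^ (sz A + (sz B + sz K + 1) + 1) < 4 ^ (sz A + sz B + 2 + sz K + 1) :=
    pow4_lt (by omega)
  omega

theorem dIO (A B K : Form) (Δ : List Form) :
    msL (.imp A K :: .imp B K :: Δ) < msL (.imp (.or A B) K :: Δ) := by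
  simp only [msL_cons, sz]
  have hA := sz_pos A; have hB := sz_pos B
  have b1 : 4 ^ (sz A + sz K + 1) ≤ 4 ^ (sz A + sz B + sz K + 2) := pow4_le (by omega)
  have b2 : 4 ^ (sz B + sz K + 1) ≤ 4 ^ (sz A + sz B + sz K + 2) := pow4_le (by omega)
  have b3 : 0 < 4 ^ (sz A + sz B + sz K + 2) := pow4_pos _
  have e : sz A + sz B + 2 + sz K + 1 = (sz A + sz B + sz K + 2) + 1 := by omega
  rw [e, pow4_succ]
  omega

theorem dSC (X : List (Form × Form)) (C : Form) :
    2 * (msX X + 4 ^ sz C) < 2 * (msX X + msL [] + 4 ^ sz C) + 1 := by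
  simp only [msL_nil]; omega

theorem dImpC (X : List (Form × Form)) (H K : Form) :
    2 * (msX X + msL [H] + 4 ^ sz K) + 1 < 2 * (msX X + 4 ^ sz (.imp H K)) := by
  simp only [msL_cons, msL_nil, sz]
  have hH := sz_pos H; have hK := sz_pos K
  have b1 : 4 ^ (sz H) ≤ 4 ^ (sz H + sz K) := pow4_le (by omega)
  have b2 : 4 ^ (sz K) ≤ 4 ^ (sz H + sz K) := pow4_le (by omega)
  have b3 : 0 < 4 ^ (sz H + sz K) := pow4_pos _
  rw [pow4_succ]
  omega

theorem dRj (Xr : List (Form × Form)) (H K F : Form) :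
    2 * (msX Xr + msL [H, .imp K F] + 4 ^ sz K) + 1 <
      2 * (msX Xr + 4 ^ (sz (.imp H K) + sz F)) := by
  simp only [msL_cons, msL_nil, sz]
  have hH := sz_pos H; have hK := sz_pos K; have hF := sz_pos F
  have b1 : 4 ^ (sz H) ≤ 4 ^ (sz H + sz K + sz F) := pow4_le (by omega)
  have b2 : 4 ^ (sz K + sz F + 1) ≤ 4 ^ (sz H + sz K + sz F) := pow4_le (by omega)
  have b3 : 4 ^ (sz K) ≤ 4 ^ (sz H + sz K + sz F) := pow4_le (by omega)
  have b5 : 4 ≤ 4 ^ (sz H + sz K + sz F) := by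
    calc (4:ℕ) = 4 ^ 1 := rfl
      _ ≤ _ := pow4_le (by omega)
  have e : sz H + sz K + 1 + sz F = (sz H + sz K + sz F) + 1 := by omega
  rw [e, pow4_succ]
  omega

theorem dAnd1 (C₁ C₂ : Form) : 4 ^ sz C₁ < 4 ^ sz (.and C₁ C₂) :=
  pow4_lt (by simp only [sz]; have := sz_pos C₂; omega)
theorem dAnd2 (C₁ C₂ : Form) : 4 ^ sz C₂ < 4 ^ sz (.and C₁ C₂) :=
  pow4_lt (by simp only [sz]; have := sz_pos C₁; omega)
theorem dOr1 (C₁ C₂ : Form) : 4 ^ sz C₁ < 4 ^ sz (.or C₁ C₂) :=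
  pow4_lt (by simp only [sz]; have := sz_pos C₂; omega)
theorem dOr2 (C₁ C₂ : Form) : 4 ^ sz C₂ < 4 ^ sz (.or C₁ C₂) :=
  pow4_lt (by simp only [sz]; have := sz_pos C₁; omega)
theorem dDjs (X : List (Form × Form)) (C : Form) :
    2 * (msX X + 4 ^ sz C) - 1 < 2 * (msX X + 4 ^ sz C) := by
  have := pow4_pos (sz C); omega

theorem dAndF1 (X : List (Form × Form)) (C₁ C₂ : Form) :
    2 * (msX X + 4 ^ sz C₁) < 2 * (msX X + 4 ^ sz (.and C₁ C₂)) := by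
  have := dAnd1 C₁ C₂; omega
theorem dAndF2 (X : List (Form × Form)) (C₁ C₂ : Form) :
    2 * (msX X + 4 ^ sz C₂) < 2 * (msX X + 4 ^ sz (.and C₁ C₂)) := by
  have := dAnd2 C₁ C₂; omega
theorem dOrF1 (X : List (Form × Form)) (C₁ C₂ : Form) :
    2 * (msX X + 4 ^ sz C₁) < 2 * (msX X + 4 ^ sz (.or C₁ C₂)) := by
  have := dOr1 C₁ C₂; omega
theorem dOrF2 (X : List (Form × Form)) (C₁ C₂ : Form) :
    2 * (msX X + 4 ^ sz C₂) < 2 * (msX X + 4 ^ sz (.or C₁ C₂)) := by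
  have := dOr2 C₁ C₂; omega

mutual


def Rj (T : List Form) (Xr : List (Form × Form)) (E F : Form) : Form :=
  match E with
  | .var n => .var n
  | .box B => .box B
  | .imp H K => seqD T Xr [H, .imp K F] K
  | _ => .bot
termination_by 2 * (msX Xr + 4 ^ (sz E + sz F))
decreasing_by
  · simp_wf; exact dRj _ _ _ _

def Djs (T : List Form) (X : List (Form × Form)) (C : Form) : List Form :=
  (splits X).attach.map
    (fun pr => Form.and (Rj T pr.1.2 pr.1.1.1 pr.1.1.2) (seqD T pr.1.2 [pr.1.1.2] C))
termination_by 2 * (msX X + 4 ^ (sz C)) - 1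
decreasing_by
  · simp_wf
    have hsp := msX_splits pr.2
    have hc := pow4_pos (sz C)
    omega
  · simp_wf
    simp only [msL_cons, msL_nil]
    have hsp := msX_splits pr.2
    have hE := sz_pos (pr.1.1.1); have hF := sz_pos (pr.1.1.2)
    have hb : 4 ^ (sz pr.1.1.2 + 1) ≤ 4 ^ (sz pr.1.1.1 + sz pr.1.1.2) := pow4_le (by omega)
    rw [pow4_succ] at hb
    have h1 : 0 < 4 ^ (sz pr.1.1.2) := pow4_pos _
    have hc := pow4_pos (sz C)
    omega

def seqC (T : List Form) (X : List (Form × Form)) (C : Form) : Form :=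
  match C with
  | .bot => listDisj (Djs T X .bot)
  | .var n => if (Form.var n) ∈ T then Form.top else listDisj (Form.var n :: Djs T X (.var n))
  | .box B => if (Form.box B) ∈ T then Form.top else listDisj (Form.box B :: Djs T X (.box B))
  | .and C₁ C₂ => .and (seqC T X C₁) (seqC T X C₂)
  | .or C₁ C₂ => listDisj (seqC T X C₁ :: seqC T X C₂ :: Djs T X (.or C₁ C₂))
  | .imp H K => seqD T X [H] K
termination_by 2 * (msX X + 4 ^ (sz C))
decreasing_by
  · simp_wf; first | exact dDjs _ _ | skip
  · simp_wf; first | exact dDjs _ _ | skip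
  · simp_wf; first | exact dDjs _ _ | skip
  · simp_wf; first | exact dAnd1 _ _ | exact dAndF1 _ _ _
  · simp_wf; first | exact dAnd2 _ _ | exact dAndF2 _ _ _
  · simp_wf; first | exact dOr1 _ _ | exact dOrF1 _ _ _
  · simp_wf; first | exact dOr2 _ _ | exact dOrF2 _ _ _
  · simp_wf; first | exact dDjs _ _ | skip
  · simp_wf; exact dImpC _ _ _

def seqD (T : List Form) (X : List (Form × Form)) (Δ : List Form) (C : Form) : Form :=
  match Δ with
  | [] => seqC T X C
  | D :: Δ' =>
    match D with
    | .bot => Form.top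
    | .var n => .imp (.var n) (seqD (.var n :: T) X Δ' C)
    | .box B => .imp (.box B) (seqD (.box B :: T) X Δ' C)
    | .and D₁ D₂ => seqD T X (D₁ :: D₂ :: Δ') C
    | .or D₁ D₂ => .and (seqD T X (D₁ :: Δ') C) (seqD T X (D₂ :: Δ') C)
    | .imp D₁ D₂ =>
      match D₁ with
      | .bot => seqD T X Δ' C
      | .var n => seqD T ((Form.var n, D₂) :: X) Δ' C
      | .box B => seqD T ((Form.box B, D₂) :: X) Δ' C
      | .and A B => seqD T X (.imp A (.imp B D₂) :: Δ') C
      | .or A B => seqD T X (.imp A D₂ :: .imp B D₂ :: Δ') C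
      | .imp A B => seqD T ((Form.imp A B, D₂) :: X) Δ' C
termination_by 2 * (msX X + msL Δ + 4 ^ (sz C)) + 1
decreasing_by
  · simp_wf
  · simp_wf; exact dDrop _ _
  · simp_wf; exact dDrop _ _
  · simp_wf; exact dA _ _ _
  · simp_wf; exact dO1 _ _ _
  · simp_wf; exact dO2 _ _ _
  · simp_wf; exact dDrop _ _
  · simp_wf; exact dPush _ _ _ _
  · simp_wf; exact dPush _ _ _ _
  · simp_wf; exact dIA _ _ _ _
  · simp_wf; exact dIO _ _ _ _
  · simp_wf; exact dPush _ _ _ _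

end

end NNILal
end PLHA
namespace PLHA
namespace NNILal

variable {T : List Form} {X : List (Form × Form)} {Δ : List Form} {C : Form}

theorem seqD_nil : seqD T X [] C = seqC T X C := by rw [seqD]
theorem seqD_bot : seqD T X (.bot :: Δ) C = Form.top := by rw [seqD]
theorem seqD_var {n} : seqD T X (.var n :: Δ) C = .imp (.var n) (seqD (.var n :: T) X Δ C) := by rw [seqD]
theorem seqD_box {B} : seqD T X (.box B :: Δ) C = .imp (.box B) (seqD (.box B :: T) X Δ C) := by rw [seqD]
theorem seqD_and {D₁ D₂} : seqD T X (.and D₁ D₂ :: Δ) C = seqD T X (D₁ :: D₂ :: Δ) C := by rw [seqD]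
theorem seqD_or {D₁ D₂} : seqD T X (.or D₁ D₂ :: Δ) C =
    .and (seqD T X (D₁ :: Δ) C) (seqD T X (D₂ :: Δ) C) := by rw [seqD]
theorem seqD_ibot {D₂} : seqD T X (.imp .bot D₂ :: Δ) C = seqD T X Δ C := by rw [seqD]
theorem seqD_ivar {n D₂} : seqD T X (.imp (.var n) D₂ :: Δ) C = seqD T ((Form.var n, D₂) :: X) Δ C := by rw [seqD]
theorem seqD_ibox {B D₂} : seqD T X (.imp (.box B) D₂ :: Δ) C = seqD T ((Form.box B, D₂) :: X) Δ C := by rw [seqD]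
theorem seqD_iand {A B D₂} : seqD T X (.imp (.and A B) D₂ :: Δ) C = seqD T X (.imp A (.imp B D₂) :: Δ) C := by rw [seqD]
theorem seqD_ior {A B D₂} : seqD T X (.imp (.or A B) D₂ :: Δ) C =
    seqD T X (.imp A D₂ :: .imp B D₂ :: Δ) C := by rw [seqD]
theorem seqD_iimp {A B D₂} : seqD T X (.imp (.imp A B) D₂ :: Δ) C = seqD T ((Form.imp A B, D₂) :: X) Δ C := by rw [seqD]

theorem seqC_bot : seqC T X .bot = listDisj (Djs T X .bot) := by rw [seqC]
theorem seqC_var {n} : seqC T X (.var n) =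
    if (Form.var n) ∈ T then Form.top else listDisj (Form.var n :: Djs T X (.var n)) := by rw [seqC]
theorem seqC_box {B} : seqC T X (.box B) =
    if (Form.box B) ∈ T then Form.top else listDisj (Form.box B :: Djs T X (.box B)) := by rw [seqC]
theorem seqC_and {C₁ C₂} : seqC T X (.and C₁ C₂) = .and (seqC T X C₁) (seqC T X C₂) := by rw [seqC]
theorem seqC_or {C₁ C₂} : seqC T X (.or C₁ C₂) =
    listDisj (seqC T X C₁ :: seqC T X C₂ :: Djs T X (.or C₁ C₂)) := by rw [seqC]
theorem seqC_imp {H K} : seqC T X (.imp H K) = seqD T X [H] K := by rw [seqC]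

theorem Rj_var {Xr n F} : Rj T Xr (.var n) F = .var n := by rw [Rj]
theorem Rj_box {Xr B F} : Rj T Xr (.box B) F = .box B := by rw [Rj]
theorem Rj_imp {Xr H K F} : Rj T Xr (.imp H K) F = seqD T Xr [H, .imp K F] K := by rw [Rj]
theorem Rj_bot {Xr F} : Rj T Xr .bot F = .bot := by
  rw [Rj] <;> (intros; simp_all)
theorem Rj_and {Xr A B F} : Rj T Xr (.and A B) F = .bot := by
  rw [Rj] <;> (intros; simp_all)
theorem Rj_or {Xr A B F} : Rj T Xr (.or A B) F = .bot := by
  rw [Rj] <;> (intros; simp_all)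

theorem Djs_eq : Djs T X C =
    (splits X).attach.map
      (fun pr => Form.and (Rj T pr.1.2 pr.1.1.1 pr.1.1.2) (seqD T pr.1.2 [pr.1.1.2] C)) := by
  rw [Djs]

theorem mem_Djs {d} : d ∈ Djs T X C ↔
    ∃ pr ∈ splits X, d = Form.and (Rj T pr.2 pr.1.1 pr.1.2) (seqD T pr.2 [pr.1.2] C) := by
  rw [Djs_eq]
  simp only [List.mem_map, List.mem_attach, true_and, Subtype.exists]
  constructor
  · rintro ⟨a, ha, rfl⟩
    exact ⟨a, ha, rfl⟩
  · rintro ⟨a, ha, rfl⟩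
    exact ⟨a, ha, rfl⟩

end NNILal
end PLHA
namespace PLHA
namespace NNILal

def mD (X : List (Form × Form)) (Δ : List Form) (C : Form) : ℕ :=
  2 * (msX X + msL Δ + 4 ^ sz C) + 1
def mC (X : List (Form × Form)) (C : Form) : ℕ := 2 * (msX X + 4 ^ sz C)
def mR (Xr : List (Form × Form)) (E F : Form) : ℕ := 2 * (msX Xr + 4 ^ (sz E + sz F))

section
variable {T : List Form} {X Xr : List (Form × Form)} {Δ : List Form} {C : Form}

theorem mC_lt_nil : mC X C < mD X [] C := by unfold mC mD; simp only [msL_nil]; omega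
theorem mD_lt_var {n} : mD X Δ C < mD X (.var n :: Δ) C := by
  have := dDrop (Form.var n) Δ; unfold mD; omega
theorem mD_lt_box {B} : mD X Δ C < mD X (.box B :: Δ) C := by
  have := dDrop (Form.box B) Δ; unfold mD; omega
theorem mD_lt_and {D₁ D₂} : mD X (D₁ :: D₂ :: Δ) C < mD X (.and D₁ D₂ :: Δ) C := by
  have := dA D₁ D₂ Δ; unfold mD; omega
theorem mD_lt_or1 {D₁ D₂} : mD X (D₁ :: Δ) C < mD X (.or D₁ D₂ :: Δ) C := by
  have := dO1 D₁ D₂ Δ; unfold mD; omega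
theorem mD_lt_or2 {D₁ D₂} : mD X (D₂ :: Δ) C < mD X (.or D₁ D₂ :: Δ) C := by
  have := dO2 D₁ D₂ Δ; unfold mD; omega
theorem mD_lt_ibot {D₂} : mD X Δ C < mD X (.imp .bot D₂ :: Δ) C := by
  have := dDrop (Form.imp .bot D₂) Δ; unfold mD; omega
theorem mD_lt_push {E D₂} : mD ((E, D₂) :: X) Δ C < mD X (.imp E D₂ :: Δ) C := by
  have := dPush E D₂ X Δ; unfold mD; omega
theorem mD_lt_iand {A B D₂} : mD X (.imp A (.imp B D₂) :: Δ) C < mD X (.imp (.and A B) D₂ :: Δ) C := by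
  have := dIA A B D₂ Δ; unfold mD; omega
theorem mD_lt_ior {A B D₂} : mD X (.imp A D₂ :: .imp B D₂ :: Δ) C < mD X (.imp (.or A B) D₂ :: Δ) C := by
  have := dIO A B D₂ Δ; unfold mD; omega
theorem mC_lt_and1 {C₁ C₂} : mC X C₁ < mC X (.and C₁ C₂) := by
  have := dAnd1 C₁ C₂; unfold mC; omega
theorem mC_lt_and2 {C₁ C₂} : mC X C₂ < mC X (.and C₁ C₂) := by
  have := dAnd2 C₁ C₂; unfold mC; omega
theorem mC_lt_or1 {C₁ C₂} : mC X C₁ < mC X (.or C₁ C₂) := by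
  have := dOr1 C₁ C₂; unfold mC; omega
theorem mC_lt_or2 {C₁ C₂} : mC X C₂ < mC X (.or C₁ C₂) := by
  have := dOr2 C₁ C₂; unfold mC; omega
theorem mD_lt_impC {H K} : mD X [H] K < mC X (.imp H K) := by
  have := dImpC X H K; unfold mD mC; omega
theorem mR_lt_mC {pr} (h : pr ∈ splits X) : mR pr.2 pr.1.1 pr.1.2 < mC X C := by
  have := msX_splits h; have := pow4_pos (sz C); have := pow4_pos (sz pr.1.1 + sz pr.1.2)
  unfold mR mC; omega
theorem mD_cont_lt_mC {pr} (h : pr ∈ splits X) : mD pr.2 [pr.1.2] C < mC X C := by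
  have hsp := msX_splits h
  have hE := sz_pos pr.1.1; have hF := sz_pos pr.1.2
  have hb : 4 ^ (sz pr.1.2 + 1) ≤ 4 ^ (sz pr.1.1 + sz pr.1.2) := pow4_le (by omega)
  rw [pow4_succ] at hb
  have h1 : 0 < 4 ^ (sz pr.1.2) := pow4_pos _
  unfold mD mC
  simp only [msL_cons, msL_nil]
  omega
theorem mD_lt_mR {H K F} : mD Xr [H, .imp K F] K < mR Xr (.imp H K) F := by
  have := dRj Xr H K F; unfold mD mR
  simp only [msL_cons, msL_nil] at *
  omega

end

theorem rho_listDisj {l : List Form} (h : ∀ A ∈ l, Form.rho A ≤ 1) :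
    Form.rho (listDisj l) ≤ 1 := by
  induction l with
  | nil => simp [listDisj, Form.rho]
  | cons A l ih =>
    cases l with
    | nil => exact h A (by simp)
    | cons B l' =>
      have : Form.rho (listDisj (A :: B :: l')) = max (Form.rho A) (Form.rho (listDisj (B :: l'))) := rfl
      rw [this]
      simp only [max_le_iff]
      exact ⟨h A (by simp), ih (fun x hx => h x (List.mem_cons_of_mem _ hx))⟩

theorem rho_top : Form.rho Form.top ≤ 1 := by simp [Form.top, Form.rho]

theorem rho_pack : ∀ n : ℕ,
    (∀ T X Δ C, mD X Δ C ≤ n → Form.rho (seqD T X Δ C) ≤ 1) ∧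
    (∀ T X C, mC X C ≤ n → Form.rho (seqC T X C) ≤ 1) ∧
    (∀ T Xr E F, mR Xr E F ≤ n → Form.rho (Rj T Xr E F) ≤ 1) := by
  intro n
  induction n using Nat.strong_induction_on with
  | _ n ih =>
  have ihD : ∀ T X Δ C, mD X Δ C < n → Form.rho (seqD T X Δ C) ≤ 1 :=
    fun T X Δ C h => (ih _ h).1 T X Δ C (le_refl _)
  have ihC : ∀ T X C, mC X C < n → Form.rho (seqC T X C) ≤ 1 :=
    fun T X C h => (ih _ h).2.1 T X C (le_refl _)
  have ihR : ∀ T Xr E F, mR Xr E F < n → Form.rho (Rj T Xr E F) ≤ 1 :=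
    fun T Xr E F h => (ih _ h).2.2 T Xr E F (le_refl _)
  have hDjs : ∀ T X C, mC X C ≤ n → ∀ d ∈ Djs T X C, Form.rho d ≤ 1 := by
    intro T X C hm d hd
    obtain ⟨pr, hpr, rfl⟩ := mem_Djs.1 hd
    have h1 : Form.rho (Rj T pr.2 pr.1.1 pr.1.2) ≤ 1 :=
      ihR _ _ _ _ (lt_of_lt_of_le (mR_lt_mC hpr) hm)
    have h2 : Form.rho (seqD T pr.2 [pr.1.2] C) ≤ 1 :=
      ihD _ _ _ _ (lt_of_lt_of_le (mD_cont_lt_mC hpr) hm)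
    simpa [Form.rho, max_le_iff] using ⟨h1, h2⟩
  refine ⟨?_, ?_, ?_⟩
  · intro T X Δ C hm
    match Δ with
    | [] =>
      rw [seqD_nil]
      exact ihC _ _ _ (lt_of_lt_of_le mC_lt_nil hm)
    | .bot :: Δ' => rw [seqD_bot]; exact rho_top
    | .var m :: Δ' =>
      rw [seqD_var]
      have h := ihD (Form.var m :: T) X Δ' C (lt_of_lt_of_le mD_lt_var hm)
      simp only [Form.rho, max_le_iff]
      exact ⟨by omega, h⟩
    | .box B :: Δ' =>
      rw [seqD_box]
      have h := ihD (Form.box B :: T) X Δ' C (lt_of_lt_of_le mD_lt_box hm)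
      simp only [Form.rho, max_le_iff]
      exact ⟨by omega, h⟩
    | .and D₁ D₂ :: Δ' =>
      rw [seqD_and]; exact ihD _ _ _ _ (lt_of_lt_of_le mD_lt_and hm)
    | .or D₁ D₂ :: Δ' =>
      rw [seqD_or]
      have h1 := ihD T X (D₁ :: Δ') C (lt_of_lt_of_le mD_lt_or1 hm)
      have h2 := ihD T X (D₂ :: Δ') C (lt_of_lt_of_le mD_lt_or2 hm)
      simp only [Form.rho, max_le_iff]
      exact ⟨h1, h2⟩
    | .imp .bot D₂ :: Δ' =>
      rw [seqD_ibot]; exact ihD _ _ _ _ (lt_of_lt_of_le mD_lt_ibot hm)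
    | .imp (.var m) D₂ :: Δ' =>
      rw [seqD_ivar]; exact ihD _ _ _ _ (lt_of_lt_of_le mD_lt_push hm)
    | .imp (.box B) D₂ :: Δ' =>
      rw [seqD_ibox]; exact ihD _ _ _ _ (lt_of_lt_of_le mD_lt_push hm)
    | .imp (.and A B) D₂ :: Δ' =>
      rw [seqD_iand]; exact ihD _ _ _ _ (lt_of_lt_of_le mD_lt_iand hm)
    | .imp (.or A B) D₂ :: Δ' =>
      rw [seqD_ior]; exact ihD _ _ _ _ (lt_of_lt_of_le mD_lt_ior hm)
    | .imp (.imp A B) D₂ :: Δ' =>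
      rw [seqD_iimp]; exact ihD _ _ _ _ (lt_of_lt_of_le mD_lt_push hm)
  · intro T X C hm
    match C with
    | .bot => rw [seqC_bot]; exact rho_listDisj (hDjs _ _ _ hm)
    | .var m =>
      rw [seqC_var]
      split
      · exact rho_top
      · refine rho_listDisj ?_
        intro d hd
        rcases List.mem_cons.1 hd with rfl | hd
        · simp [Form.rho]
        · exact hDjs _ _ _ hm d hd
    | .box B =>
      rw [seqC_box]
      split
      · exact rho_top
      · refine rho_listDisj ?_
        intro d hd
        rcases List.mem_cons.1 hd with rfl | hd
        · simp [Form.rho]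
        · exact hDjs _ _ _ hm d hd
    | .and C₁ C₂ =>
      rw [seqC_and]
      have h1 := ihC T X C₁ (lt_of_lt_of_le mC_lt_and1 hm)
      have h2 := ihC T X C₂ (lt_of_lt_of_le mC_lt_and2 hm)
      simp only [Form.rho, max_le_iff]
      exact ⟨h1, h2⟩
    | .or C₁ C₂ =>
      rw [seqC_or]
      refine rho_listDisj ?_
      intro d hd
      rcases List.mem_cons.1 hd with rfl | hd
      · exact ihC _ _ _ (lt_of_lt_of_le mC_lt_or1 hm)
      rcases List.mem_cons.1 hd with rfl | hd
      · exact ihC _ _ _ (lt_of_lt_of_le mC_lt_or2 hm)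
      · exact hDjs _ _ _ hm d hd
    | .imp H K =>
      rw [seqC_imp]
      exact ihD _ _ _ _ (lt_of_lt_of_le mD_lt_impC hm)
  · intro T Xr E F hm
    match E with
    | .var m => rw [Rj_var]; simp [Form.rho]
    | .box B => rw [Rj_box]; simp [Form.rho]
    | .bot => rw [Rj_bot]; simp [Form.rho]
    | .and A B => rw [Rj_and]; simp [Form.rho]
    | .or A B => rw [Rj_or]; simp [Form.rho]
    | .imp H K =>
      rw [Rj_imp]
      exact ihD _ _ _ _ (lt_of_lt_of_le mD_lt_mR hm)

theorem rho_seqD (T X Δ C) : Form.rho (seqD T X Δ C) ≤ 1 :=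
  (rho_pack (mD X Δ C)).1 _ _ _ _ (le_refl _)

end NNILal
end PLHA
namespace PLHA
namespace NNILal

def Xf (X : List (Form × Form)) : List Form := X.map (fun p => Form.imp p.1 p.2)

theorem Xf_cons (p : Form × Form) (X) : Xf ((p.1, p.2) :: X) = Form.imp p.1 p.2 :: Xf X := rfl

theorem Der.ofSub {L L' : List Form} {A} (h : Der L A) (hs : ∀ x ∈ L, x ∈ L' ∨ Der L' x) :
    Der L' A :=
  h.ofDer (fun x hx => (hs x hx).elim Der.hyp id)

theorem Der.disjElim {L : List Form} {l : List Form} {C}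
    (h : Der L (listDisj l)) (hb : ∀ A ∈ l, Der (A :: L) C) : Der L C := by
  induction l generalizing L with
  | nil => exact h.exf
  | cons A l ih =>
    cases l with
    | nil => exact h.cut (hb A (by simp))
    | cons B l' =>
      have h' : Der L (.or A (listDisj (B :: l'))) := h
      refine h'.orE ((hb A (by simp)).ded) (Der.ded ?_)
      refine ih (.hyp (by simp)) ?_
      intro D hD
      exact (hb D (List.mem_cons_of_mem _ hD)).ofSub
        (by intro x hx; rcases List.mem_cons.1 hx with rfl | hx
            · exact Or.inl (by simp)
            · exact Or.inl (by simp [hx]))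

/-- membership in the antecedent list of a split. -/
theorem splits_sub {X : List (Form × Form)} {pr} (h : pr ∈ splits X) :
    ∀ p ∈ pr.2, p ∈ X := by
  intro p hp
  exact (splits_perm h).mem_iff.2 (List.mem_cons_of_mem _ hp)

theorem splits_head_mem {X : List (Form × Form)} {pr} (h : pr ∈ splits X) : pr.1 ∈ X :=
  (splits_perm h).mem_iff.2 (List.mem_cons_self)

theorem sound_pack : ∀ n : ℕ,
    (∀ T X Δ C, mD X Δ C ≤ n → Der (seqD T X Δ C :: (T ++ Xf X ++ Δ)) C) ∧
    (∀ T X C, mC X C ≤ n → Der (seqC T X C :: (T ++ Xf X)) C) ∧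
    (∀ T Xr E F, mR Xr E F ≤ n → Der (Rj T Xr E F :: (T ++ Xf Xr ++ [.imp E F])) E) := by
  intro n
  induction n using Nat.strong_induction_on with
  | _ n ih =>
  have ihD : ∀ T X Δ C, mD X Δ C < n → Der (seqD T X Δ C :: (T ++ Xf X ++ Δ)) C :=
    fun T X Δ C h => (ih _ h).1 T X Δ C (le_refl _)
  have ihC : ∀ T X C, mC X C < n → Der (seqC T X C :: (T ++ Xf X)) C :=
    fun T X C h => (ih _ h).2.1 T X C (le_refl _)
  have ihR : ∀ T Xr E F, mR Xr E F < n → Der (Rj T Xr E F :: (T ++ Xf Xr ++ [.imp E F])) E :=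
    fun T Xr E F h => (ih _ h).2.2 T Xr E F (le_refl _)
  have hDjs : ∀ T X C, mC X C ≤ n → ∀ (L : List Form), (∀ x ∈ T ++ Xf X, x ∈ L) →
      ∀ d ∈ Djs T X C, Der (d :: L) C := by
    intro T X C hm L hL d hd
    obtain ⟨pr, hpr, rfl⟩ := mem_Djs.1 hd
    have hmemT : ∀ x ∈ T, x ∈ L := fun x hx => hL x (by simp [hx])
    have hmemX : ∀ x ∈ Xf X, x ∈ L := fun x hx => hL x (by simp [hx])
    have hmemXr : ∀ x ∈ Xf pr.2, x ∈ L := by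
      intro x hx
      obtain ⟨p, hp, rfl⟩ := List.mem_map.1 hx
      exact hmemX _ (List.mem_map.2 ⟨p, splits_sub hpr _ hp, rfl⟩)
    have hpair : Form.imp pr.1.1 pr.1.2 ∈ L :=
      hmemX _ (List.mem_map.2 ⟨pr.1, splits_head_mem hpr, rfl⟩)
    set d := Form.and (Rj T pr.2 pr.1.1 pr.1.2) (seqD T pr.2 [pr.1.2] C) with hd_eq
    have hhd : Der (d :: L) d := .hyp (List.mem_cons_self)
    have hR : Der (d :: L) (Rj T pr.2 pr.1.1 pr.1.2) := Der.andE1 (hd_eq ▸ hhd)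
    have hcont : Der (d :: L) (seqD T pr.2 [pr.1.2] C) := Der.andE2 (hd_eq ▸ hhd)
    have hE : Der (d :: L) pr.1.1 := by
      refine (ihR T pr.2 pr.1.1 pr.1.2 (lt_of_lt_of_le (mR_lt_mC hpr) hm)).ofSub ?_
      intro x hx
      rcases List.mem_cons.1 hx with rfl | hx
      · exact Or.inr hR
      simp only [List.mem_append, List.mem_cons, List.not_mem_nil, or_false] at hx
      rcases hx with (hx | hx) | h3
      · exact Or.inl (List.mem_cons_of_mem _ (hmemT _ hx))
      · exact Or.inl (List.mem_cons_of_mem _ (hmemXr _ hx))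
      · rw [h3]; exact Or.inl (List.mem_cons_of_mem _ hpair)
    have hF : Der (d :: L) pr.1.2 := .mp (.hyp (List.mem_cons_of_mem _ hpair)) hE
    refine (ihD T pr.2 [pr.1.2] C (lt_of_lt_of_le (mD_cont_lt_mC hpr) hm)).ofSub ?_
    intro x hx
    rcases List.mem_cons.1 hx with rfl | hx
    · exact Or.inr hcont
    simp only [List.mem_append, List.mem_cons, List.not_mem_nil, or_false] at hx
    rcases hx with (hx | hx) | h3
    · exact Or.inl (List.mem_cons_of_mem _ (hmemT _ hx))
    · exact Or.inl (List.mem_cons_of_mem _ (hmemXr _ hx))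
    · rw [h3]; exact Or.inr hF
  refine ⟨?_, ?_, ?_⟩
  · intro T X Δ C hm
    match Δ with
    | [] =>
      rw [seqD_nil]
      refine (ihC T X C (lt_of_lt_of_le mC_lt_nil hm)).ofSub ?_
      intro x hx; exact Or.inl (by simpa using List.mem_cons.1 hx |>.elim (fun h => by simp [h]) (fun h => by simp at h ⊢; tauto))
    | .bot :: Δ' =>
      rw [seqD_bot]
      exact Der.exf (.hyp (by simp))
    | .var m :: Δ' =>
      rw [seqD_var]
      have hS : Der (Form.imp (.var m) (seqD (.var m :: T) X Δ' C) :: (T ++ Xf X ++ (Form.var m :: Δ')))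
          (seqD (.var m :: T) X Δ' C) :=
        .mp (Der.hyp (A := Form.imp (.var m) (seqD (.var m :: T) X Δ' C)) (by simp))
          (Der.hyp (A := Form.var m) (by simp))
      refine (ihD (.var m :: T) X Δ' C (lt_of_lt_of_le mD_lt_var hm)).ofSub ?_
      intro x hx
      rcases List.mem_cons.1 hx with rfl | hx
      · exact Or.inr hS
      · simp only [List.mem_append, List.mem_cons] at hx
        refine Or.inl (by simp only [List.mem_cons, List.mem_append]; tauto)
    | .box B :: Δ' =>
      rw [seqD_box]
      have hS : Der (Form.imp (.box B) (seqD (.box B :: T) X Δ' C) :: (T ++ Xf X ++ (Form.box B :: Δ')))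
          (seqD (.box B :: T) X Δ' C) :=
        .mp (Der.hyp (A := Form.imp (.box B) (seqD (.box B :: T) X Δ' C)) (by simp))
          (Der.hyp (A := Form.box B) (by simp))
      refine (ihD (.box B :: T) X Δ' C (lt_of_lt_of_le mD_lt_box hm)).ofSub ?_
      intro x hx
      rcases List.mem_cons.1 hx with rfl | hx
      · exact Or.inr hS
      · simp only [List.mem_append, List.mem_cons] at hx
        refine Or.inl (by simp only [List.mem_cons, List.mem_append]; tauto)
    | .and D₁ D₂ :: Δ' =>
      rw [seqD_and]
      refine (ihD T X (D₁ :: D₂ :: Δ') C (lt_of_lt_of_le mD_lt_and hm)).ofSub ?_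
      intro x hx
      rcases List.mem_cons.1 hx with rfl | hx
      · exact Or.inl (by simp)
      simp only [List.mem_append, List.mem_cons] at hx
      rcases hx with (hx | hx) | h13 | h14 | hx
      · exact Or.inl (by simp [hx])
      · exact Or.inl (by simp [hx])
      · rw [h13]; exact Or.inr (Der.andE1 (B := D₂) (Der.hyp (A := Form.and D₁ D₂) (by simp)))
      · rw [h14]; exact Or.inr (Der.andE2 (A := D₁) (Der.hyp (A := Form.and D₁ D₂) (by simp)))
      · exact Or.inl (by simp [hx])
    | .or D₁ D₂ :: Δ' =>
      rw [seqD_or]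
      set S₁ := seqD T X (D₁ :: Δ') C
      set S₂ := seqD T X (D₂ :: Δ') C
      set L := Form.and S₁ S₂ :: (T ++ Xf X ++ (Form.or D₁ D₂ :: Δ'))
      have hOr : Der L (.or D₁ D₂) := .hyp (by simp [L])
      have d₁ : Der (D₁ :: L) C := by
        refine (ihD T X (D₁ :: Δ') C (lt_of_lt_of_le mD_lt_or1 hm)).ofSub ?_
        intro x hx
        rcases List.mem_cons.1 hx with rfl | hx
        · exact Or.inr ((Der.andE1 (B := S₂) (Der.hyp (A := Form.and S₁ S₂) (by simp [L]))).weaken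
            (fun y hy => List.mem_cons_of_mem _ hy))
        simp only [List.mem_append, List.mem_cons] at hx
        rcases hx with (hx | hx) | rfl | hx
        · exact Or.inl (by simp [L, hx])
        · exact Or.inl (by simp [L, hx])
        · exact Or.inl (by simp)
        · exact Or.inl (by simp [L, hx])
      have d₂ : Der (D₂ :: L) C := by
        refine (ihD T X (D₂ :: Δ') C (lt_of_lt_of_le mD_lt_or2 hm)).ofSub ?_
        intro x hx
        rcases List.mem_cons.1 hx with rfl | hx
        · exact Or.inr ((Der.andE2 (A := S₁) (Der.hyp (A := Form.and S₁ S₂) (by simp [L]))).weaken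
            (fun y hy => List.mem_cons_of_mem _ hy))
        simp only [List.mem_append, List.mem_cons] at hx
        rcases hx with (hx | hx) | rfl | hx
        · exact Or.inl (by simp [L, hx])
        · exact Or.inl (by simp [L, hx])
        · exact Or.inl (by simp)
        · exact Or.inl (by simp [L, hx])
      exact hOr.orE d₁.ded d₂.ded
    | .imp .bot D₂ :: Δ' =>
      rw [seqD_ibot]
      refine (ihD T X Δ' C (lt_of_lt_of_le mD_lt_ibot hm)).ofSub ?_
      intro x hx
      rcases List.mem_cons.1 hx with rfl | hx
      · exact Or.inl (by simp)
      · simp only [List.mem_append] at hx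
        exact Or.inl (by simp only [List.mem_cons, List.mem_append]; tauto)
    | .imp (.var m) D₂ :: Δ' =>
      rw [seqD_ivar]
      refine (ihD T ((Form.var m, D₂) :: X) Δ' C (lt_of_lt_of_le mD_lt_push hm)).ofSub ?_
      intro x hx
      rcases List.mem_cons.1 hx with rfl | hx
      · exact Or.inl (by simp)
      · simp only [List.mem_append, Xf, List.map_cons, List.mem_cons] at hx
        refine Or.inl (by simp only [List.mem_cons, List.mem_append, Xf]; tauto)
    | .imp (.box B) D₂ :: Δ' =>
      rw [seqD_ibox]
      refine (ihD T ((Form.box B, D₂) :: X) Δ' C (lt_of_lt_of_le mD_lt_push hm)).ofSub ?_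
      intro x hx
      rcases List.mem_cons.1 hx with rfl | hx
      · exact Or.inl (by simp)
      · simp only [List.mem_append, Xf, List.map_cons, List.mem_cons] at hx
        refine Or.inl (by simp only [List.mem_cons, List.mem_append, Xf]; tauto)
    | .imp (.imp A B) D₂ :: Δ' =>
      rw [seqD_iimp]
      refine (ihD T ((Form.imp A B, D₂) :: X) Δ' C (lt_of_lt_of_le mD_lt_push hm)).ofSub ?_
      intro x hx
      rcases List.mem_cons.1 hx with rfl | hx
      · exact Or.inl (by simp)
      · simp only [List.mem_append, Xf, List.map_cons, List.mem_cons] at hx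
        refine Or.inl (by simp only [List.mem_cons, List.mem_append, Xf]; tauto)
    | .imp (.and A B) D₂ :: Δ' =>
      rw [seqD_iand]
      refine (ihD T X (.imp A (.imp B D₂) :: Δ') C (lt_of_lt_of_le mD_lt_iand hm)).ofSub ?_
      intro x hx
      rcases List.mem_cons.1 hx with rfl | hx
      · exact Or.inl (by simp)
      simp only [List.mem_append, List.mem_cons] at hx
      rcases hx with (hx | hx) | h13 | hx
      · exact Or.inl (by simp [hx])
      · exact Or.inl (by simp [hx])
      · rw [h13]
        refine Or.inr (Der.ded (Der.ded (.mp (Der.hyp (A := Form.imp (.and A B) D₂) ?_)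
          (Der.andI (Der.hyp (A := A) ?_) (Der.hyp (A := B) ?_))))) <;> simp
      · exact Or.inl (by simp [hx])
    | .imp (.or A B) D₂ :: Δ' =>
      rw [seqD_ior]
      refine (ihD T X (.imp A D₂ :: .imp B D₂ :: Δ') C (lt_of_lt_of_le mD_lt_ior hm)).ofSub ?_
      intro x hx
      rcases List.mem_cons.1 hx with rfl | hx
      · exact Or.inl (by simp)
      simp only [List.mem_append, List.mem_cons] at hx
      rcases hx with (hx | hx) | h13 | h14 | hx
      · exact Or.inl (by simp [hx])
      · exact Or.inl (by simp [hx])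
      · rw [h13]
        refine Or.inr (Der.ded (.mp (Der.hyp (A := Form.imp (.or A B) D₂) ?_)
          (Der.orI1 (Der.hyp (A := A) ?_)))) <;> simp
      · rw [h14]
        refine Or.inr (Der.ded (.mp (Der.hyp (A := Form.imp (.or A B) D₂) ?_)
          (Der.orI2 (Der.hyp (A := B) ?_)))) <;> simp
      · exact Or.inl (by simp [hx])
  · intro T X C hm
    match C with
    | .bot =>
      rw [seqC_bot]
      refine Der.disjElim (.hyp (List.mem_cons_self)) ?_
      intro d hd
      exact hDjs T X .bot hm (listDisj (Djs T X .bot) :: (T ++ Xf X))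
        (fun x hx => List.mem_cons_of_mem _ hx) d hd
    | .var m =>
      rw [seqC_var]
      split
      · exact .hyp (by simp; tauto)
      · refine Der.disjElim (.hyp (List.mem_cons_self)) ?_
        intro d hd
        rcases List.mem_cons.1 hd with rfl | hd
        · exact .hyp (by simp)
        exact hDjs T X (.var m) hm _ (fun x hx => List.mem_cons_of_mem _ hx) d hd
    | .box B =>
      rw [seqC_box]
      split
      · exact .hyp (by simp; tauto)
      · refine Der.disjElim (.hyp (List.mem_cons_self)) ?_
        intro d hd
        rcases List.mem_cons.1 hd with rfl | hd
        · exact .hyp (by simp)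
        exact hDjs T X (.box B) hm _ (fun x hx => List.mem_cons_of_mem _ hx) d hd
    | .and C₁ C₂ =>
      rw [seqC_and]
      have h1 : Der (Form.and (seqC T X C₁) (seqC T X C₂) :: (T ++ Xf X)) C₁ := by
        refine (ihC T X C₁ (lt_of_lt_of_le mC_lt_and1 hm)).ofSub ?_
        intro x hx
        rcases List.mem_cons.1 hx with rfl | hx
        · exact Or.inr (Der.andE1 (B := seqC T X C₂)
            (Der.hyp (A := Form.and (seqC T X C₁) (seqC T X C₂)) (by simp)))
        · exact Or.inl (by simp [hx])
      have h2 : Der (Form.and (seqC T X C₁) (seqC T X C₂) :: (T ++ Xf X)) C₂ := by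
        refine (ihC T X C₂ (lt_of_lt_of_le mC_lt_and2 hm)).ofSub ?_
        intro x hx
        rcases List.mem_cons.1 hx with rfl | hx
        · exact Or.inr (Der.andE2 (A := seqC T X C₁)
            (Der.hyp (A := Form.and (seqC T X C₁) (seqC T X C₂)) (by simp)))
        · exact Or.inl (by simp [hx])
      exact h1.andI h2
    | .or C₁ C₂ =>
      rw [seqC_or]
      refine Der.disjElim (.hyp (List.mem_cons_self)) ?_
      intro d hd
      rcases List.mem_cons.1 hd with rfl | hd
      · refine Der.orI1 ?_
        refine (ihC T X C₁ (lt_of_lt_of_le mC_lt_or1 hm)).ofSub ?_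
        intro x hx
        rcases List.mem_cons.1 hx with rfl | hx
        · exact Or.inl (by simp)
        · exact Or.inl (by simp [hx])
      rcases List.mem_cons.1 hd with rfl | hd
      · refine Der.orI2 ?_
        refine (ihC T X C₂ (lt_of_lt_of_le mC_lt_or2 hm)).ofSub ?_
        intro x hx
        rcases List.mem_cons.1 hx with rfl | hx
        · exact Or.inl (by simp)
        · exact Or.inl (by simp [hx])
      exact hDjs T X (.or C₁ C₂) hm _ (fun x hx => List.mem_cons_of_mem _ hx) d hd
    | .imp H K =>
      rw [seqC_imp]
      refine Der.ded ?_
      refine (ihD T X [H] K (lt_of_lt_of_le mD_lt_impC hm)).ofSub ?_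
      intro x hx
      rcases List.mem_cons.1 hx with rfl | hx
      · exact Or.inl (by simp)
      simp only [List.mem_append, List.mem_cons, List.not_mem_nil, or_false] at hx
      rcases hx with (hx | hx) | h3
      · exact Or.inl (by simp [hx])
      · exact Or.inl (by simp [hx])
      · rw [h3]; exact Or.inl (by simp)
  · intro T Xr E F hm
    match E with
    | .var m => rw [Rj_var]; exact .hyp (by simp)
    | .box B => rw [Rj_box]; exact .hyp (by simp)
    | .bot => rw [Rj_bot]; exact .hyp (by simp)
    | .and A B => rw [Rj_and]; exact Der.exf (.hyp (by simp))
    | .or A B => rw [Rj_or]; exact Der.exf (.hyp (by simp))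
    | .imp H K =>
      rw [Rj_imp]
      refine Der.ded ?_
      set S := seqD T Xr [H, .imp K F] K
      set L := H :: S :: (T ++ Xf Xr ++ [Form.imp (.imp H K) F])
      have hKF : Der L (.imp K F) := by
        refine Der.ded (.mp (Der.hyp (A := Form.imp (.imp H K) F) ?_)
          (.mp (.ax (.a1 K H)) (Der.hyp (A := K) ?_))) <;> simp [L]
      refine (ihD T Xr [H, .imp K F] K (lt_of_lt_of_le mD_lt_mR hm)).ofSub ?_
      intro x hx
      rcases List.mem_cons.1 hx with rfl | hx
      · exact Or.inl (by simp [L, S])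
      simp only [List.mem_append, List.mem_cons, List.not_mem_nil, or_false] at hx
      rcases hx with (hx | hx) | h3 | h4
      · exact Or.inl (by simp [L, hx])
      · exact Or.inl (by simp [L, hx])
      · rw [h3]; exact Or.inl (by simp [L])
      · rw [h4]; exact Or.inr hKF

end NNILal
end PLHA
namespace PLHA
namespace NNILal

def AtomF (a : Form) : Prop := (∃ n, a = .var n) ∨ (∃ B, a = .box B)

theorem force_atom_iff {M : KM} {w : M.W} {a : Form} (h : AtomF a) :
    force M w a ↔ M.V w a := by
  rcases h with ⟨n, rfl⟩ | ⟨B, rfl⟩ <;> exact Iff.rfl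

/-- a certified component for the gluing construction. -/
structure GC (M : KM) (w : M.W) (T : List Form) : Type 1 where
  N : KM
  u : N.W
  reach : Reach M w N u T

section Glue

variable {M : KM} {w : M.W} {T : List Form} (L : List (GC M w T))

def gW := Option (Σ i : Fin L.length, (L.get i).N.W)

inductive gle : gW L → gW L → Prop
  | rr : gle none none
  | ri (i : Fin L.length) (v : (L.get i).N.W) (h : (L.get i).N.le (L.get i).u v) :
      gle none (some ⟨i, v⟩)
  | ii (i : Fin L.length) (v v' : (L.get i).N.W) (h : (L.get i).N.le v v') :
      gle (some ⟨i, v⟩) (some ⟨i, v'⟩)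

theorem gle_some_inv {i : Fin L.length} {v : (L.get i).N.W} {z : gW L}
    (h : gle L (some ⟨i, v⟩) z) :
    ∃ v' : (L.get i).N.W, z = some ⟨i, v'⟩ ∧ (L.get i).N.le v v' := by
  cases h with
  | ii i v v' h => exact ⟨v', rfl, h⟩

def grv (a : Form) : Prop :=
  M.V w a ∧ ∀ (i : Fin L.length) (v : (L.get i).N.W),
    (L.get i).N.le (L.get i).u v → (L.get i).N.V v a

def gM : KM where
  W := gW L
  le := gle L
  refl := by
    rintro (_ | ⟨i, v⟩)
    · exact gle.rr
    · exact gle.ii i v v ((L.get i).N.refl v)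
  trans := by
    intro a b c hab hbc
    cases hab with
    | rr => exact hbc
    | ri i v h =>
      obtain ⟨v', rfl, h'⟩ := gle_some_inv L hbc
      exact gle.ri i v' ((L.get i).N.trans h h')
    | ii i v v' h =>
      obtain ⟨v'', rfl, h'⟩ := gle_some_inv L hbc
      exact gle.ii i v v'' ((L.get i).N.trans h h')
  V x a := match x with
    | none => grv L a
    | some ⟨i, v⟩ => (L.get i).N.V v a
  mono := by
    intro a b f hab
    cases hab with
    | rr => exact id
    | ri i v h => exact fun hf => hf.2 i v h
    | ii i v v' h => exact fun hf => (L.get i).N.mono h hf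

theorem gforce {i : Fin L.length} {v : (L.get i).N.W} :
    ∀ A, force (gM L) (some ⟨i, v⟩) A ↔ force (L.get i).N v A := by
  intro A
  induction A generalizing v with
  | var n => exact Iff.rfl
  | bot => exact Iff.rfl
  | box B => exact Iff.rfl
  | and A B ihA ihB => exact and_congr (ihA) (ihB)
  | or A B ihA ihB => exact or_congr (ihA) (ihB)
  | imp A B ihA ihB =>
    constructor
    · intro hf v' hv' hA
      exact (ihB).1 (hf (some ⟨i, v'⟩) (gle.ii i v v' hv') ((ihA).2 hA))
    · intro hf z hz hA
      obtain ⟨v', rfl, h'⟩ := gle_some_inv L hz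
      exact (ihB).2 (hf v' h' ((ihA).1 hA))

theorem gexport {i : Fin L.length} (A : Form) (h : force (gM L) none A) :
    force (L.get i).N (L.get i).u A :=
  (gforce L A).1 (force_persist (M := gM L)
    (gle.ri i (L.get i).u ((L.get i).N.refl _)) h)

end Glue

theorem glue_lemma {M : KM} {w : M.W} {T : List Form}
    (hT : ∀ a ∈ T, AtomF a) (hTw : ∀ a ∈ T, force M w a)
    (L : List (GC M w T)) (X : List (Form × Form))
    (hX : ∀ c ∈ L, ∀ p ∈ X, force c.N c.u (.imp p.1 p.2))
    (hE : ∀ p ∈ X, (∃ c ∈ L, ¬ force c.N c.u p.1) ∨ (AtomF p.1 ∧ ¬ force M w p.1)) :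
    ∃ (N : KM) (u : N.W), Reach M w N u T ∧ (∀ p ∈ X, force N u (.imp p.1 p.2)) ∧
      (∀ c ∈ L, ∀ A, force N u A → force c.N c.u A) ∧
      (∀ a, AtomF a → force N u a → force M w a) := by
  classical
  -- extract the reach data of the components
  have hch : ∀ i : Fin L.length, ∃ (w' : M.W) (Z : (L.get i).N.W → M.W → Prop),
      M.le w w' ∧ Sub (L.get i).N M Z ∧ Z (L.get i).u w' ∧
      ∀ (x : (L.get i).N.W), ∀ a ∈ T, force (L.get i).N x a :=
    fun i => (L.get i).reach
  choose wc Zc hwc hsub hZc hTg using hch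
  have hatom_root : ∀ a, AtomF a → (force (gM L) none a ↔ grv L a) := by
    intro a ha
    rcases ha with ⟨n, rfl⟩ | ⟨B, rfl⟩ <;> exact Iff.rfl
  have hgrv : ∀ a, grv L a ↔ M.V w a := by
    intro a
    constructor
    · exact fun h => h.1
    · intro h
      refine ⟨h, ?_⟩
      intro i v hv
      have h1 : M.V (wc i) a := M.mono (hwc i) h
      have h2 : (L.get i).N.V (L.get i).u a := ((hsub i (hZc i)).1 a).2 h1
      exact (L.get i).N.mono hv h2
  -- the export property
  have hexp : ∀ c ∈ L, ∀ A, force (gM L) none A → force c.N c.u A := by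
    intro c hc A hA
    obtain ⟨i, rfl⟩ := List.mem_iff_get.1 hc
    exact gexport L A hA
  -- X-pairs are forced at the root
  have hXroot : ∀ p ∈ X, force (gM L) none (.imp p.1 p.2) := by
    intro p hp z hz hp1
    cases hz with
    | rr =>
      rcases hE p hp with ⟨c, hc, hnc⟩ | ⟨hat, hnw⟩
      · exact absurd (hexp c hc p.1 hp1) hnc
      · exact absurd ((force_atom_iff hat).2 ((hgrv p.1).1 ((hatom_root p.1 hat).1 hp1))) hnw
    | ri i v h =>
      have h1 : force (L.get i).N v p.1 := (gforce L p.1).1 hp1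
      have h2 : force (L.get i).N (L.get i).u (.imp p.1 p.2) :=
        hX _ (List.mem_iff_get.2 ⟨i, rfl⟩) p hp
      exact (gforce L p.2).2 (h2 v h h1)
  -- the subsimulation
  have hreach : Reach M w (gM L) none T := by
    refine ⟨w, fun x y => match x with
      | none => y = w
      | some ⟨i, v⟩ => Zc i v y, M.refl w, ?_, rfl, ?_⟩
    · intro x y hxy
      rcases x with _ | ⟨i, v⟩
      · have hyw : y = w := hxy
        rw [hyw]
        constructor
        · intro a
          exact hgrv a
        · intro x' hx'
          cases hx' with
          | rr => exact ⟨w, M.refl w, rfl⟩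
          | ri i v h =>
            obtain ⟨y', hy', hZ'⟩ := (hsub i (hZc i)).2 v h
            exact ⟨y', M.trans (hwc i) hy', hZ'⟩
      · have hz : Zc i v y := hxy
        constructor
        · intro a
          exact (hsub i hz).1 a
        · intro x' hx'
          obtain ⟨v', rfl, h'⟩ := gle_some_inv L hx'
          obtain ⟨y', hy', hZ'⟩ := (hsub i hz).2 v' h'
          exact ⟨y', hy', hZ'⟩
    · rintro (_ | ⟨i, v⟩) a ha
      · exact (hatom_root a (hT a ha)).2 ((hgrv a).2 ((force_atom_iff (hT a ha)).1 (hTw a ha)))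
      · exact (gforce L a).2 (hTg i v a ha)
  refine ⟨gM L, none, hreach, hXroot, hexp, ?_⟩
  intro a ha hf
  exact (force_atom_iff ha).2 ((hgrv a).1 ((hatom_root a ha).1 hf))

end NNILal
end PLHA
namespace PLHA
namespace NNILal

open Classical

def OKp (p : Form × Form) : Prop := AtomF p.1 ∨ ∃ H K, p.1 = .imp H K
def OKX (X : List (Form × Form)) : Prop := ∀ p ∈ X, OKp p
def OKT (T : List Form) : Prop := ∀ a ∈ T, AtomF a

theorem force_top {M : KM} {w : M.W} : force M w Form.top := fun _ _ h => h

theorem not_force_listDisj {M : KM} {w : M.W} {l : List Form}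
    (h : ¬ force M w (listDisj l)) : ∀ A ∈ l, ¬ force M w A := by
  induction l with
  | nil => simp
  | cons A l ih =>
    cases l with
    | nil =>
      intro B hB
      rcases List.mem_cons.1 hB with rfl | hB
      · exact h
      · simp at hB
    | cons B l' =>
      have h' : ¬ (force M w A ∨ force M w (listDisj (B :: l'))) := h
      intro D hD
      rcases List.mem_cons.1 hD with rfl | hD
      · exact fun hf => h' (Or.inl hf)
      · exact ih (fun hf => h' (Or.inr hf)) D hD

theorem collect_comps {M : KM} {w : M.W} {T : List Form} {X : List (Form × Form)}
    (l : List ((Form × Form) × List (Form × Form)))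
    (h : ∀ pr ∈ l, (AtomF pr.1.1 ∧ ¬ force M w pr.1.1) ∨
      ∃ (N : KM) (u : N.W), Reach M w N u T ∧
        (∀ p ∈ X, force N u (.imp p.1 p.2)) ∧ ¬ force N u pr.1.1) :
    ∃ Lc : List (GC M w T), (∀ c ∈ Lc, ∀ p ∈ X, force c.N c.u (.imp p.1 p.2)) ∧
      ∀ pr ∈ l, (AtomF pr.1.1 ∧ ¬ force M w pr.1.1) ∨
        ∃ c ∈ Lc, ¬ force c.N c.u pr.1.1 := by
  induction l with
  | nil => exact ⟨[], by simp, by simp⟩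
  | cons pr l ih =>
    obtain ⟨Lc, hLc, hl⟩ := ih (fun q hq => h q (List.mem_cons_of_mem _ hq))
    rcases h pr (List.mem_cons_self) with hat | ⟨N, u, hr, hXf, hnE⟩
    · refine ⟨Lc, hLc, ?_⟩
      intro q hq
      rcases List.mem_cons.1 hq with rfl | hq
      · exact Or.inl hat
      · exact hl q hq
    · refine ⟨⟨N, u, hr⟩ :: Lc, ?_, ?_⟩
      · intro c hc p hp
        rcases List.mem_cons.1 hc with rfl | hc
        · exact hXf p hp
        · exact hLc c hc p hp
      · intro q hq
        rcases List.mem_cons.1 hq with rfl | hq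
        · exact Or.inr ⟨⟨N, u, hr⟩, List.mem_cons_self, hnE⟩
        · rcases hl q hq with hat | ⟨c, hc, hnc⟩
          · exact Or.inl hat
          · exact Or.inr ⟨c, List.mem_cons_of_mem _ hc, hnc⟩

theorem B_pack : ∀ n : ℕ,
    (∀ T X Δ C, mD X Δ C ≤ n → OKT T → OKX X →
      ∀ (M : KM) (w : M.W), (∀ a ∈ T, force M w a) → ¬ force M w (seqD T X Δ C) →
      ∃ (N : KM) (u : N.W), Reach M w N u T ∧ (∀ p ∈ X, force N u (.imp p.1 p.2)) ∧
        (∀ D ∈ Δ, force N u D) ∧ ¬ force N u C) ∧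
    (∀ T X C, mC X C ≤ n → OKT T → OKX X →
      ∀ (M : KM) (w : M.W), (∀ a ∈ T, force M w a) → ¬ force M w (seqC T X C) →
      ∃ (N : KM) (u : N.W), Reach M w N u T ∧ (∀ p ∈ X, force N u (.imp p.1 p.2)) ∧
        ¬ force N u C) := by
  intro n
  induction n using Nat.strong_induction_on with
  | _ n ih =>
  have ihD : ∀ T X Δ C, mD X Δ C < n → OKT T → OKX X →
      ∀ (M : KM) (w : M.W), (∀ a ∈ T, force M w a) → ¬ force M w (seqD T X Δ C) →
      ∃ (N : KM) (u : N.W), Reach M w N u T ∧ (∀ p ∈ X, force N u (.imp p.1 p.2)) ∧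
        (∀ D ∈ Δ, force N u D) ∧ ¬ force N u C :=
    fun T X Δ C h => (ih _ h).1 T X Δ C (le_refl _)
  have ihC : ∀ T X C, mC X C < n → OKT T → OKX X →
      ∀ (M : KM) (w : M.W), (∀ a ∈ T, force M w a) → ¬ force M w (seqC T X C) →
      ∃ (N : KM) (u : N.W), Reach M w N u T ∧ (∀ p ∈ X, force N u (.imp p.1 p.2)) ∧
        ¬ force N u C :=
    fun T X C h => (ih _ h).2 T X C (le_refl _)
  -- the main Djs analysis, common to the bot/var/box/or cases of seqC
  have hDjsB : ∀ T X C, mC X C ≤ n → OKT T → OKX X →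
      ∀ (M : KM) (w : M.W), (∀ a ∈ T, force M w a) →
      (∀ d ∈ Djs T X C, ¬ force M w d) →
      -- either a full countermodel via a continuation, or refuters for all pairs
      (∃ (N : KM) (u : N.W), Reach M w N u T ∧ (∀ p ∈ X, force N u (.imp p.1 p.2)) ∧
        ¬ force N u C) ∨
      (∃ Lc : List (GC M w T), (∀ c ∈ Lc, ∀ p ∈ X, force c.N c.u (.imp p.1 p.2)) ∧
        ∀ p ∈ X, (∃ c ∈ Lc, ¬ force c.N c.u p.1) ∨ (AtomF p.1 ∧ ¬ force M w p.1)) := by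
    intro T X C hm hT hX M w hTw hnd
    by_cases hA : ∃ pr ∈ splits X, ¬ force M w (seqD T pr.2 [pr.1.2] C)
    · left
      obtain ⟨pr, hpr, hna⟩ := hA
      have hOKXr : OKX pr.2 := fun p hp => hX p (splits_sub hpr p hp)
      obtain ⟨N, u, hr, hXr, hΔ, hC⟩ :=
        ihD T pr.2 [pr.1.2] C (lt_of_lt_of_le (mD_cont_lt_mC hpr) hm) hT hOKXr M w hTw hna
      have hF : force N u pr.1.2 := hΔ pr.1.2 (List.mem_cons_self)
      refine ⟨N, u, hr, ?_, hC⟩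
      intro p hp
      have : p = pr.1 ∨ p ∈ pr.2 := List.mem_cons.1 ((splits_perm hpr).mem_iff.1 hp)
      rcases this with rfl | hp2
      · exact fun v hv _ => force_persist hv hF
      · exact hXr p hp2
    · right
      push_neg at hA
      have hnR : ∀ pr ∈ splits X, ¬ force M w (Rj T pr.2 pr.1.1 pr.1.2) := by
        intro pr hpr hfr
        have hd : Form.and (Rj T pr.2 pr.1.1 pr.1.2) (seqD T pr.2 [pr.1.2] C) ∈ Djs T X C :=
          mem_Djs.2 ⟨pr, hpr, rfl⟩
        exact hnd _ hd ⟨hfr, hA pr hpr⟩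
      have hcomp : ∀ pr ∈ splits X, (AtomF pr.1.1 ∧ ¬ force M w pr.1.1) ∨
          ∃ (N : KM) (u : N.W), Reach M w N u T ∧
            (∀ p ∈ X, force N u (.imp p.1 p.2)) ∧ ¬ force N u pr.1.1 := by
        intro pr hpr
        rcases hX pr.1 (splits_head_mem hpr) with hat | ⟨H, K, hEimp⟩
        · left
          refine ⟨hat, ?_⟩
          rcases hat with ⟨m, hEv⟩ | ⟨B, hEb⟩
          · have := hnR pr hpr
            rw [hEv, Rj_var] at this
            rw [hEv]
            exact this
          · have := hnR pr hpr
            rw [hEb, Rj_box] at this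
            rw [hEb]
            exact this
        · right
          have hnr := hnR pr hpr
          rw [hEimp, Rj_imp] at hnr
          have hOKXr : OKX pr.2 := fun p hp => hX p (splits_sub hpr p hp)
          have hlt : mD pr.2 [H, .imp K pr.1.2] K < n := by
            have h1 : mD pr.2 [H, .imp K pr.1.2] K < mR pr.2 (.imp H K) pr.1.2 := mD_lt_mR
            have h2 : mR pr.2 (.imp H K) pr.1.2 < mC X C := by
              have h3 := mR_lt_mC (C := C) hpr
              rw [hEimp] at h3
              exact h3
            omega
          obtain ⟨N, u, hr, hXr, hΔ, hK⟩ := ihD T pr.2 [H, .imp K pr.1.2] K hlt hT hOKXr M w hTw hnr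
          have hH : force N u H := hΔ H (by simp)
          have hKF : force N u (.imp K pr.1.2) := hΔ _ (by simp)
          refine ⟨N, u, hr, ?_, ?_⟩
          · intro p hp
            have : p = pr.1 ∨ p ∈ pr.2 := List.mem_cons.1 ((splits_perm hpr).mem_iff.1 hp)
            rcases this with rfl | hp2
            · -- p = (imp H K, F)
              rw [hEimp]
              intro v hv hHK
              have hvH : force N v H := force_persist hv hH
              have hvK : force N v K := hHK v (N.refl v) hvH
              exact force_persist hv hKF v (N.refl v) hvK
            · exact hXr p hp2
          · rw [hEimp]
            intro hf
            exact hK (hf u (N.refl u) hH)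
      obtain ⟨Lc, hLc, hl⟩ := collect_comps (splits X) hcomp
      refine ⟨Lc, hLc, ?_⟩
      intro p hp
      obtain ⟨r, hr⟩ := splits_surj hp
      rcases hl (p, r) hr with ⟨hat, hnw⟩ | ⟨c, hc, hnc⟩
      · exact Or.inr ⟨hat, hnw⟩
      · exact Or.inl ⟨c, hc, hnc⟩
  refine ⟨?_, ?_⟩
  · intro T X Δ C hm hT hX M w hTw hnf
    match Δ with
    | [] =>
      rw [seqD_nil] at hnf
      obtain ⟨N, u, hr, hXf, hC⟩ := ihC T X C (lt_of_lt_of_le mC_lt_nil hm) hT hX M w hTw hnf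
      exact ⟨N, u, hr, hXf, by simp, hC⟩
    | .bot :: Δ' =>
      rw [seqD_bot] at hnf
      exact absurd force_top hnf
    | .var m :: Δ' =>
      rw [seqD_var] at hnf
      have : ¬ ∀ v, M.le w v → force M v (.var m) → force M v (seqD (.var m :: T) X Δ' C) := hnf
      push_neg at this
      obtain ⟨w', hle, hvm, hnf'⟩ := this
      have hT' : OKT (Form.var m :: T) := by
        intro a ha
        rcases List.mem_cons.1 ha with rfl | ha
        · exact Or.inl ⟨m, rfl⟩
        · exact hT a ha
      have hTw' : ∀ a ∈ Form.var m :: T, force M w' a := by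
        intro a ha
        rcases List.mem_cons.1 ha with rfl | ha
        · exact hvm
        · exact force_persist hle (hTw a ha)
      obtain ⟨N, u, hr, hXf, hΔ, hC⟩ :=
        ihD (Form.var m :: T) X Δ' C (lt_of_lt_of_le mD_lt_var hm) hT' hX M w' hTw' hnf'
      obtain ⟨w'', Z, hle2, hsub, hZ, hTg⟩ := hr
      refine ⟨N, u, ⟨w'', Z, M.trans hle hle2, hsub, hZ,
        fun x a ha => hTg x a (List.mem_cons_of_mem _ ha)⟩, hXf, ?_, hC⟩
      intro D hD
      rcases List.mem_cons.1 hD with rfl | hD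
      · exact hTg u (Form.var m) (List.mem_cons_self)
      · exact hΔ D hD
    | .box B :: Δ' =>
      rw [seqD_box] at hnf
      have : ¬ ∀ v, M.le w v → force M v (.box B) → force M v (seqD (.box B :: T) X Δ' C) := hnf
      push_neg at this
      obtain ⟨w', hle, hvm, hnf'⟩ := this
      have hT' : OKT (Form.box B :: T) := by
        intro a ha
        rcases List.mem_cons.1 ha with rfl | ha
        · exact Or.inr ⟨B, rfl⟩
        · exact hT a ha
      have hTw' : ∀ a ∈ Form.box B :: T, force M w' a := by
        intro a ha
        rcases List.mem_cons.1 ha with rfl | ha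
        · exact hvm
        · exact force_persist hle (hTw a ha)
      obtain ⟨N, u, hr, hXf, hΔ, hC⟩ :=
        ihD (Form.box B :: T) X Δ' C (lt_of_lt_of_le mD_lt_box hm) hT' hX M w' hTw' hnf'
      obtain ⟨w'', Z, hle2, hsub, hZ, hTg⟩ := hr
      refine ⟨N, u, ⟨w'', Z, M.trans hle hle2, hsub, hZ,
        fun x a ha => hTg x a (List.mem_cons_of_mem _ ha)⟩, hXf, ?_, hC⟩
      intro D hD
      rcases List.mem_cons.1 hD with rfl | hD
      · exact hTg u (Form.box B) (List.mem_cons_self)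
      · exact hΔ D hD
    | .and D₁ D₂ :: Δ' =>
      rw [seqD_and] at hnf
      obtain ⟨N, u, hr, hXf, hΔ, hC⟩ :=
        ihD T X (D₁ :: D₂ :: Δ') C (lt_of_lt_of_le mD_lt_and hm) hT hX M w hTw hnf
      refine ⟨N, u, hr, hXf, ?_, hC⟩
      intro D hD
      rcases List.mem_cons.1 hD with rfl | hD
      · exact ⟨hΔ D₁ (by simp), hΔ D₂ (by simp)⟩
      · exact hΔ D (by simp [hD])
    | .or D₁ D₂ :: Δ' =>
      rw [seqD_or] at hnf
      have : ¬ force M w (seqD T X (D₁ :: Δ') C) ∨ ¬ force M w (seqD T X (D₂ :: Δ') C) := by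
        by_contra hcon
        push_neg at hcon
        exact hnf ⟨hcon.1, hcon.2⟩
      rcases this with hn | hn
      · obtain ⟨N, u, hr, hXf, hΔ, hC⟩ :=
          ihD T X (D₁ :: Δ') C (lt_of_lt_of_le mD_lt_or1 hm) hT hX M w hTw hn
        refine ⟨N, u, hr, hXf, ?_, hC⟩
        intro D hD
        rcases List.mem_cons.1 hD with rfl | hD
        · exact Or.inl (hΔ D₁ (by simp))
        · exact hΔ D (by simp [hD])
      · obtain ⟨N, u, hr, hXf, hΔ, hC⟩ :=
          ihD T X (D₂ :: Δ') C (lt_of_lt_of_le mD_lt_or2 hm) hT hX M w hTw hn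
        refine ⟨N, u, hr, hXf, ?_, hC⟩
        intro D hD
        rcases List.mem_cons.1 hD with rfl | hD
        · exact Or.inr (hΔ D₂ (by simp))
        · exact hΔ D (by simp [hD])
    | .imp .bot D₂ :: Δ' =>
      rw [seqD_ibot] at hnf
      obtain ⟨N, u, hr, hXf, hΔ, hC⟩ :=
        ihD T X Δ' C (lt_of_lt_of_le mD_lt_ibot hm) hT hX M w hTw hnf
      refine ⟨N, u, hr, hXf, ?_, hC⟩
      intro D hD
      rcases List.mem_cons.1 hD with rfl | hD
      · exact fun v hv hbot => hbot.elim
      · exact hΔ D hD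
    | .imp (.var m) D₂ :: Δ' =>
      rw [seqD_ivar] at hnf
      have hX' : OKX ((Form.var m, D₂) :: X) := by
        intro p hp
        rcases List.mem_cons.1 hp with rfl | hp
        · exact Or.inl (Or.inl ⟨m, rfl⟩)
        · exact hX p hp
      obtain ⟨N, u, hr, hXf, hΔ, hC⟩ :=
        ihD T ((Form.var m, D₂) :: X) Δ' C (lt_of_lt_of_le mD_lt_push hm) hT hX' M w hTw hnf
      refine ⟨N, u, hr, fun p hp => hXf p (List.mem_cons_of_mem _ hp), ?_, hC⟩
      intro D hD
      rcases List.mem_cons.1 hD with rfl | hD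
      · exact hXf (Form.var m, D₂) (List.mem_cons_self)
      · exact hΔ D hD
    | .imp (.box B) D₂ :: Δ' =>
      rw [seqD_ibox] at hnf
      have hX' : OKX ((Form.box B, D₂) :: X) := by
        intro p hp
        rcases List.mem_cons.1 hp with rfl | hp
        · exact Or.inl (Or.inr ⟨B, rfl⟩)
        · exact hX p hp
      obtain ⟨N, u, hr, hXf, hΔ, hC⟩ :=
        ihD T ((Form.box B, D₂) :: X) Δ' C (lt_of_lt_of_le mD_lt_push hm) hT hX' M w hTw hnf
      refine ⟨N, u, hr, fun p hp => hXf p (List.mem_cons_of_mem _ hp), ?_, hC⟩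
      intro D hD
      rcases List.mem_cons.1 hD with rfl | hD
      · exact hXf (Form.box B, D₂) (List.mem_cons_self)
      · exact hΔ D hD
    | .imp (.imp A B) D₂ :: Δ' =>
      rw [seqD_iimp] at hnf
      have hX' : OKX ((Form.imp A B, D₂) :: X) := by
        intro p hp
        rcases List.mem_cons.1 hp with rfl | hp
        · exact Or.inr ⟨A, B, rfl⟩
        · exact hX p hp
      obtain ⟨N, u, hr, hXf, hΔ, hC⟩ :=
        ihD T ((Form.imp A B, D₂) :: X) Δ' C (lt_of_lt_of_le mD_lt_push hm) hT hX' M w hTw hnf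
      refine ⟨N, u, hr, fun p hp => hXf p (List.mem_cons_of_mem _ hp), ?_, hC⟩
      intro D hD
      rcases List.mem_cons.1 hD with rfl | hD
      · exact hXf (Form.imp A B, D₂) (List.mem_cons_self)
      · exact hΔ D hD
    | .imp (.and A B) D₂ :: Δ' =>
      rw [seqD_iand] at hnf
      obtain ⟨N, u, hr, hXf, hΔ, hC⟩ :=
        ihD T X (.imp A (.imp B D₂) :: Δ') C (lt_of_lt_of_le mD_lt_iand hm) hT hX M w hTw hnf
      refine ⟨N, u, hr, hXf, ?_, hC⟩
      intro D hD
      rcases List.mem_cons.1 hD with rfl | hD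
      · intro v hv hab
        exact hΔ _ (List.mem_cons_self) v hv hab.1 v (N.refl v) hab.2
      · exact hΔ D (by simp [hD])
    | .imp (.or A B) D₂ :: Δ' =>
      rw [seqD_ior] at hnf
      obtain ⟨N, u, hr, hXf, hΔ, hC⟩ :=
        ihD T X (.imp A D₂ :: .imp B D₂ :: Δ') C (lt_of_lt_of_le mD_lt_ior hm) hT hX M w hTw hnf
      refine ⟨N, u, hr, hXf, ?_, hC⟩
      intro D hD
      rcases List.mem_cons.1 hD with rfl | hD
      · intro v hv hab
        rcases hab with ha | hb
        · exact hΔ (Form.imp A D₂) (by simp) v hv ha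
        · exact hΔ (Form.imp B D₂) (by simp) v hv hb
      · exact hΔ D (by simp [hD])
  · intro T X C hm hT hX M w hTw hnf
    match C with
    | .bot =>
      rw [seqC_bot] at hnf
      have hnd := not_force_listDisj hnf
      rcases hDjsB T X .bot hm hT hX M w hTw hnd with ⟨N, u, hr, hXf, hC⟩ | ⟨Lc, hLc, hl⟩
      · exact ⟨N, u, hr, hXf, hC⟩
      · obtain ⟨N, u, hr, hXf, hexp, hatom⟩ := glue_lemma hT hTw Lc X hLc hl
        exact ⟨N, u, hr, hXf, fun h => h⟩
    | .var m =>
      rw [seqC_var] at hnf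
      split at hnf
      · exact absurd force_top hnf
      · have hnd' := not_force_listDisj hnf
        have hnq : ¬ force M w (.var m) := hnd' _ (List.mem_cons_self)
        have hnd : ∀ d ∈ Djs T X (.var m), ¬ force M w d :=
          fun d hd => hnd' d (List.mem_cons_of_mem _ hd)
        rcases hDjsB T X (.var m) hm hT hX M w hTw hnd with ⟨N, u, hr, hXf, hC⟩ | ⟨Lc, hLc, hl⟩
        · exact ⟨N, u, hr, hXf, hC⟩
        · obtain ⟨N, u, hr, hXf, hexp, hatom⟩ := glue_lemma hT hTw Lc X hLc hl
          refine ⟨N, u, hr, hXf, ?_⟩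
          intro hf
          exact hnq (hatom _ (Or.inl ⟨m, rfl⟩) hf)
    | .box B =>
      rw [seqC_box] at hnf
      split at hnf
      · exact absurd force_top hnf
      · have hnd' := not_force_listDisj hnf
        have hnq : ¬ force M w (.box B) := hnd' _ (List.mem_cons_self)
        have hnd : ∀ d ∈ Djs T X (.box B), ¬ force M w d :=
          fun d hd => hnd' d (List.mem_cons_of_mem _ hd)
        rcases hDjsB T X (.box B) hm hT hX M w hTw hnd with ⟨N, u, hr, hXf, hC⟩ | ⟨Lc, hLc, hl⟩
        · exact ⟨N, u, hr, hXf, hC⟩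
        · obtain ⟨N, u, hr, hXf, hexp, hatom⟩ := glue_lemma hT hTw Lc X hLc hl
          refine ⟨N, u, hr, hXf, ?_⟩
          intro hf
          exact hnq (hatom _ (Or.inr ⟨B, rfl⟩) hf)
    | .and C₁ C₂ =>
      rw [seqC_and] at hnf
      have : ¬ force M w (seqC T X C₁) ∨ ¬ force M w (seqC T X C₂) := by
        by_contra hcon
        push_neg at hcon
        exact hnf ⟨hcon.1, hcon.2⟩
      rcases this with hn | hn
      · obtain ⟨N, u, hr, hXf, hC⟩ :=
          ihC T X C₁ (lt_of_lt_of_le mC_lt_and1 hm) hT hX M w hTw hn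
        exact ⟨N, u, hr, hXf, fun h => hC h.1⟩
      · obtain ⟨N, u, hr, hXf, hC⟩ :=
          ihC T X C₂ (lt_of_lt_of_le mC_lt_and2 hm) hT hX M w hTw hn
        exact ⟨N, u, hr, hXf, fun h => hC h.2⟩
    | .or C₁ C₂ =>
      rw [seqC_or] at hnf
      have hnd' := not_force_listDisj hnf
      have hn1 : ¬ force M w (seqC T X C₁) := hnd' _ (by simp)
      have hn2 : ¬ force M w (seqC T X C₂) := hnd' _ (by simp)
      have hnd : ∀ d ∈ Djs T X (.or C₁ C₂), ¬ force M w d := by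
        intro d hd
        exact hnd' d (by simp [hd])
      rcases hDjsB T X (.or C₁ C₂) hm hT hX M w hTw hnd with ⟨N, u, hr, hXf, hC⟩ | ⟨Lc, hLc, hl⟩
      · exact ⟨N, u, hr, hXf, hC⟩
      · obtain ⟨N₁, u₁, hr₁, hXf₁, hC₁⟩ :=
          ihC T X C₁ (lt_of_lt_of_le mC_lt_or1 hm) hT hX M w hTw hn1
        obtain ⟨N₂, u₂, hr₂, hXf₂, hC₂⟩ :=
          ihC T X C₂ (lt_of_lt_of_le mC_lt_or2 hm) hT hX M w hTw hn2
        set c₁ : GC M w T := ⟨N₁, u₁, hr₁⟩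
        set c₂ : GC M w T := ⟨N₂, u₂, hr₂⟩
        have hLc' : ∀ c ∈ c₁ :: c₂ :: Lc, ∀ p ∈ X, force c.N c.u (.imp p.1 p.2) := by
          intro c hc p hp
          rcases List.mem_cons.1 hc with rfl | hc
          · exact hXf₁ p hp
          rcases List.mem_cons.1 hc with rfl | hc
          · exact hXf₂ p hp
          · exact hLc c hc p hp
        have hl' : ∀ p ∈ X, (∃ c ∈ c₁ :: c₂ :: Lc, ¬ force c.N c.u p.1) ∨
            (AtomF p.1 ∧ ¬ force M w p.1) := by
          intro p hp
          rcases hl p hp with ⟨c, hc, hnc⟩ | hat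
          · exact Or.inl ⟨c, by simp [hc], hnc⟩
          · exact Or.inr hat
        obtain ⟨N, u, hr, hXf, hexp, hatom⟩ := glue_lemma hT hTw (c₁ :: c₂ :: Lc) X hLc' hl'
        refine ⟨N, u, hr, hXf, ?_⟩
        intro hf
        rcases hf with hf | hf
        · exact hC₁ (hexp c₁ (by simp) C₁ hf)
        · exact hC₂ (hexp c₂ (by simp) C₂ hf)
    | .imp H K =>
      rw [seqC_imp] at hnf
      obtain ⟨N, u, hr, hXf, hΔ, hK⟩ :=
        ihD T X [H] K (lt_of_lt_of_le mD_lt_impC hm) hT hX M w hTw hnf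
      refine ⟨N, u, hr, hXf, ?_⟩
      intro hf
      exact hK (hf u (N.refl u) (hΔ H (List.mem_cons_self)))

end NNILal
end PLHA
namespace PLHA
namespace NNILal

/-- Visser's NNIL-algorithm. -/
def star (A : Form) : Form := seqD [] [] [] A

theorem star_nnil (A : Form) : NNILc (star A) := rho_seqD [] [] [] A

theorem star_sound (A : Form) : IPCbProves (.imp (star A) A) := by
  have h : Der (seqD [] [] [] A :: ([] ++ Xf [] ++ [])) A :=
    (sound_pack (mD [] [] A)).1 [] [] [] A (le_refl _)
  have h2 : Der [star A] A := by
    refine h.ofSub ?_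
    intro x hx
    exact Or.inl (by simpa [Xf, star] using hx)
  exact ipcb_iff_der.2 h2.ded

theorem star_best {A B : Form} (hB : NNILc B) (h : IPCbProves (.imp B A)) :
    IPCbProves (.imp B (star A)) := by
  by_contra hc
  have hnd : ¬ Der [B] (star A) := fun hd => hc (ipcb_iff_der.2 hd.ded)
  obtain ⟨Γ, hfB, hnstar⟩ := completeness hnd
  have hnf : ¬ force canon Γ (seqD [] [] [] A) := hnstar
  obtain ⟨N, u, hr, _, _, hnA⟩ :=
    (B_pack (mD [] [] A)).1 [] [] [] A (le_refl _) (by simp [OKT]) (by simp [OKX])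
      canon Γ (by simp) hnf
  obtain ⟨w', Z, hle, hsub, hZ, hTg⟩ := hr
  have hfB' : force canon w' B := force_persist hle hfB
  have huB : force N u B := nnil_transfer hsub hB hZ hfB'
  have hBA : Der [] (.imp B A) := ipcb_iff_der.1 h
  have : force N u (.imp B A) := sound hBA N u (by simp)
  exact hnA (this u (N.refl u) huB)

theorem star_mono {A₁ A₂ : Form} (h : IPCbProves (.imp A₁ A₂)) :
    IPCbProves (.imp (star A₁) (star A₂)) := by
  refine star_best (star_nnil A₁) ?_
  have h1 : Der [] (.imp (star A₁) A₁) := ipcb_iff_der.1 (star_sound A₁)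
  have h2 : Der [] (.imp A₁ A₂) := ipcb_iff_der.1 h
  refine ipcb_iff_der.2 ?_
  exact Der.ded (.mp (h2.weaken (by simp)) (.mp (h1.weaken (by simp)) (.hyp (by simp))))

end NNILal
end PLHA

namespace PLHA

/-- best NNIL-approximation: the NNIL-algorithm terminates on every
input, i.e. there is a total operation `star` such that `star A` is an NNIL
proposition with IPC_□ ⊢ star A → A which is the best NNIL approximation of A from
below, and the construction is monotone. -/
theorem nnil_best_approximation :
    ∃ star : Form → Form,
      (∀ A : Form, NNILc (star A) ∧ IPCbProves (.imp (star A) A) ∧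
        ∀ B : Form, NNILc B → IPCbProves (.imp B A) → IPCbProves (.imp B (star A))) ∧
      ∀ A₁ A₂ : Form, IPCbProves (.imp A₁ A₂) → IPCbProves (.imp (star A₁) (star A₂)) := by
  refine ⟨NNILal.star, fun A => ⟨NNILal.star_nnil A, NNILal.star_sound A, ?_⟩,
    fun A₁ A₂ h => NNILal.star_mono h⟩
  intro B hB h
  exact NNILal.star_best hB h

end PLHA
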